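/- arXiv:1203.3404 — 5 statements merged into one kernel-verified Lean document; each statement's English description precedes it below -/
import Mathlib

section
/- For 0 < |q| < 1 and x ∈ ℂ*, Jacobi's triple product identity holds: θ_q(x) = (q; q)_∞ (−x; q)_∞ (−q/x; q)_∞, where θ_q(x) = Σ_{n∈ℤ} q^{n(n-1)/2} x^n. -/
open Finset Filter

namespace JTP
noncomputable def qp (q : ℂ) (m : ℕ) : ℂ := ∏ j ∈ Finset.range m, (1 - q ^ (j+1))
noncomputable def dI (q : ℂ) (m : ℤ) : ℂ := if 0 ≤ m then (qp q m.toNat)⁻¹ else 0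
noncomputable def cc (q : ℂ) (N : ℕ) (n : ℤ) : ℂ := qp q (2*N) * dI q ((N:ℤ)+n) * dI q ((N:ℤ)-n)

variable {q : ℂ}

lemma one_sub_pow_ne (hq1 : ‖q‖ < 1) (j : ℕ) : (1 : ℂ) - q^(j+1) ≠ 0 := by
  intro h
  have h2 : q ^ (j+1) = 1 := by linear_combination -h
  have : ‖q^(j+1)‖ < 1 := by
    rw [norm_pow]
    exact pow_lt_one₀ (norm_nonneg q) hq1 (Nat.succ_ne_zero j)
  rw [h2, norm_one] at this; exact lt_irrefl 1 this

lemma qp_ne (hq1 : ‖q‖ < 1) (m : ℕ) : qp q m ≠ 0 :=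
  Finset.prod_ne_zero_iff.2 fun j _ => one_sub_pow_ne hq1 j

lemma qp_zero : qp q 0 = 1 := Finset.prod_range_zero _

lemma qp_succ (m : ℕ) : qp q (m+1) = qp q m * (1 - q^(m+1)) := Finset.prod_range_succ _ m

lemma dI_neg {m : ℤ} (hm : m < 0) : dI q m = 0 := if_neg (by omega)

lemma dI_neg_one : dI q (-1) = 0 := dI_neg (by norm_num)
lemma dI_neg_two : dI q (-2) = 0 := dI_neg (by norm_num)

lemma dI_coe (m : ℕ) : dI q (m : ℤ) = (qp q m)⁻¹ := by
  rw [dI, if_pos (by positivity), Int.toNat_natCast]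


private lemma helper_zs (A u v1 v2 v3 w s2 s3 : ℂ)
    (hA : A ≠ 0) (hu : u ≠ 0) (hv1 : v1 ≠ 0) (hv2 : v2 ≠ 0)
    (key : v3 = (1+w)*u + s3*v1) :
    A*v1*v2*v3 * (1*u)⁻¹ * (A*v1*v2)⁻¹
    = (1+w) * (A*v1 * 1⁻¹ * (A*v1)⁻¹) + s2 * (A*v1 * 0 * (A*v1*v2)⁻¹)
      + s3 * (A*v1 * (1*u)⁻¹ * A⁻¹) := by
  have hAv : A*v1 ≠ 0 := mul_ne_zero hA hv1
  have hAvv : A*v1*v2 ≠ 0 := mul_ne_zero hAv hv2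
  simp only [one_mul, inv_one, mul_one, mul_zero, zero_mul, add_zero]
  calc A*v1*v2*v3 * u⁻¹ * (A*v1*v2)⁻¹
      = v3 * u⁻¹ * ((A*v1*v2) * (A*v1*v2)⁻¹) := by ring
    _ = ((1+w)*u + s3*v1) * u⁻¹ := by rw [mul_inv_cancel₀ hAvv, key]; ring
    _ = (1+w) * (u * u⁻¹) + s3 * (v1 * u⁻¹ * (A * A⁻¹)) := by
        rw [mul_inv_cancel₀ hA]; ring
    _ = (1+w) * ((A*v1) * (A*v1)⁻¹) + s3 * (A*v1 * u⁻¹ * A⁻¹) := by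
        rw [mul_inv_cancel₀ hu, mul_inv_cancel₀ hAv]
        all_goals ring
    _ = _ := by
        rw [mul_inv_cancel₀ hAv]
        all_goals ring

private lemma helper_sz (A v u1 u2 u3 w s2 s3 : ℂ)
    (hA : A ≠ 0) (hv : v ≠ 0) (hu1 : u1 ≠ 0) (hu2 : u2 ≠ 0)
    (key : u3 = (1+w)*v + s2*u1) :
    A*u1*u2*u3 * (A*u1*u2)⁻¹ * (1*v)⁻¹
    = (1+w) * (A*u1 * (A*u1)⁻¹ * 1⁻¹) + s2 * (A*u1 * A⁻¹ * (1*v)⁻¹)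
      + s3 * (A*u1 * (A*u1*u2)⁻¹ * 0) := by
  have hAu : A*u1 ≠ 0 := mul_ne_zero hA hu1
  have hAuu : A*u1*u2 ≠ 0 := mul_ne_zero hAu hu2
  simp only [one_mul, inv_one, mul_one, mul_zero, add_zero]
  calc A*u1*u2*u3 * (A*u1*u2)⁻¹ * v⁻¹
      = u3 * v⁻¹ * ((A*u1*u2) * (A*u1*u2)⁻¹) := by ring
    _ = ((1+w)*v + s2*u1) * v⁻¹ := by rw [mul_inv_cancel₀ hAuu, key]; ring
    _ = (1+w) * (v * v⁻¹) + s2 * (u1 * v⁻¹ * (A * A⁻¹)) := by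
        rw [mul_inv_cancel₀ hA]; ring
    _ = _ := by
        rw [mul_inv_cancel₀ hv, mul_inv_cancel₀ hAu]
        all_goals ring

private lemma helper_zz (u1 u2 w s : ℂ) (hu1 : u1 ≠ 0) (key : u2 = (1+w)*u1) :
    1*u1*u2 * (1*u1)⁻¹ * (1*u1)⁻¹
    = (1+w) * (1 * 1⁻¹ * 1⁻¹) + s * (1 * 0 * (1*u1)⁻¹) + s * (1 * (1*u1)⁻¹ * 0) := by
  simp only [one_mul, inv_one, mul_one, mul_zero, zero_mul, add_zero]
  rw [key]
  linear_combination (1+w)*(u1*u1⁻¹+1)*(mul_inv_cancel₀ hu1)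

private lemma branch_helper (P A B u1 u2 v1 v2 W1 W2 w sa sb : ℂ)
    (h1 : u1 ≠ 0) (h2 : u2 ≠ 0) (h3 : v1 ≠ 0) (h4 : v2 ≠ 0)
    (key : W1*W2 = (1+w)*u2*v2 + sb*u1*u2 + sa*v1*v2) :
    P*W1*W2 * (A*u1*u2)⁻¹ * (B*v1*v2)⁻¹
    = (1+w) * (P * (A*u1)⁻¹ * (B*v1)⁻¹) + sb * (P * A⁻¹ * (B*v1*v2)⁻¹)
      + sa * (P * (A*u1*u2)⁻¹ * B⁻¹) := by
  simp only [mul_inv]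
  calc P*W1*W2 * (A⁻¹*u1⁻¹*u2⁻¹) * (B⁻¹*v1⁻¹*v2⁻¹)
      = (W1*W2) * (P * (A⁻¹*u1⁻¹*u2⁻¹) * (B⁻¹*v1⁻¹*v2⁻¹)) := by ring
    _ = ((1+w)*u2*v2 + sb*u1*u2 + sa*v1*v2) * (P * (A⁻¹*u1⁻¹*u2⁻¹) * (B⁻¹*v1⁻¹*v2⁻¹)) := by
        rw [key]
    _ = (1+w) * (P * (A⁻¹*u1⁻¹) * (B⁻¹*v1⁻¹)) * (u2*u2⁻¹) * (v2*v2⁻¹)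
        + sb * (P * A⁻¹ * (B⁻¹*v1⁻¹*v2⁻¹)) * (u1*u1⁻¹) * (u2*u2⁻¹)
        + sa * (P * (A⁻¹*u1⁻¹*u2⁻¹) * B⁻¹) * (v1*v1⁻¹) * (v2*v2⁻¹) := by ring
    _ = _ := by
        rw [mul_inv_cancel₀ h1, mul_inv_cancel₀ h2, mul_inv_cancel₀ h3, mul_inv_cancel₀ h4]
        ring

lemma cc_recur (hq0 : q ≠ 0) (hq1 : ‖q‖ < 1) (N : ℕ) (n : ℤ) :
    cc q (N+1) n = (1 + q^(2*N+1)) * cc q N n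
      + q ^ ((N:ℤ)+1-n) * cc q N (n-1) + q ^ ((N:ℤ)+1+n) * cc q N (n+1) := by
  have hne := qp_ne hq1 (q := q)
  have hos := one_sub_pow_ne hq1 (q := q)
  rcases show n ≤ -((N:ℤ)+2) ∨ n = -((N:ℤ)+1) ∨ (-(N:ℤ) ≤ n ∧ n ≤ (N:ℤ))
      ∨ n = (N:ℤ)+1 ∨ (N:ℤ)+2 ≤ n by omega with h | h | h | h | h
  · simp only [cc]; push_cast
    rw [dI_neg (by omega : (N:ℤ)+1 + n < 0), dI_neg (by omega : (N:ℤ) + n < 0),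
      dI_neg (by omega : (N:ℤ) + (n-1) < 0), dI_neg (by omega : (N:ℤ) + (n+1) < 0)]
    ring
  · subst h
    simp only [cc]; push_cast
    rw [show (N:ℤ) + 1 + -((N:ℤ)+1) = ((0:ℕ):ℤ) by push_cast; ring,
      show (N:ℤ) + 1 - -((N:ℤ)+1) = ((2*N+2:ℕ):ℤ) by push_cast; ring,
      show (N:ℤ) + -((N:ℤ)+1) = -1 by ring,
      show (N:ℤ) - -((N:ℤ)+1) = ((2*N+1:ℕ):ℤ) by push_cast; ring,
      show (N:ℤ) + (-((N:ℤ)+1)-1) = -2 by ring,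
      show (N:ℤ) - (-((N:ℤ)+1)-1) = ((2*N+2:ℕ):ℤ) by push_cast; ring,
      show (N:ℤ) + (-((N:ℤ)+1)+1) = ((0:ℕ):ℤ) by push_cast; ring,
      show (N:ℤ) - (-((N:ℤ)+1)+1) = ((2*N:ℕ):ℤ) by push_cast; ring]
    simp only [dI_coe, dI_neg_one, dI_neg_two, zpow_natCast, pow_zero, qp_zero,
      show 2*(N+1) = 2*N+2 from by ring]
    field_simp
    simp only [mul_zero, zero_mul, zero_div, zero_add, add_zero, mul_one]
    rw [div_self (hne _), div_self (hne _)]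
  · obtain ⟨a, b, ha, hb, hab⟩ : ∃ a b : ℕ, (N:ℤ)+n = a ∧ (N:ℤ)-n = b ∧ a+b = 2*N :=
      ⟨((N:ℤ)+n).toNat, ((N:ℤ)-n).toNat, by omega, by omega, by omega⟩
    simp only [cc]; push_cast
    rw [show (N:ℤ)+1+n = ((a+1:ℕ):ℤ) by push_cast; omega,
      show (N:ℤ)+1-n = ((b+1:ℕ):ℤ) by push_cast; omega,
      show (N:ℤ)+(n-1) = (a:ℤ)-1 by omega,
      show (N:ℤ)-(n-1) = ((b+1:ℕ):ℤ) by push_cast; omega,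
      show (N:ℤ)+(n+1) = ((a+1:ℕ):ℤ) by push_cast; omega,
      show (N:ℤ)-(n+1) = (b:ℤ)-1 by omega,
      ha, hb, show 2*(N+1) = a+b+2 by omega, show 2*N = a+b by omega]
    simp only [dI_coe, zpow_natCast]
    rcases a with _ | a <;> rcases b with _ | b
    · rw [show ((0:ℕ):ℤ) - 1 = -1 by norm_num, dI_neg_one]
      rw [show 0+0+2 = 0+1+1 from by omega, qp_succ (0+1), qp_succ 0, qp_zero]
      exact helper_zz _ _ _ _ (hos 0) (by ring)
    · rw [show ((0:ℕ):ℤ) - 1 = -1 by norm_num, dI_neg_one,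
        show ((b+1:ℕ):ℤ) - 1 = ((b:ℕ):ℤ) by push_cast; ring, dI_coe,
        show 0+(b+1) = b+1 from by omega,
        show b+1+2 = b+1+1+1 from by omega,
        qp_succ (b+1+1), qp_succ (b+1), qp_succ 0, qp_zero, qp_succ b]
      exact helper_zs (qp q b) _ _ _ _ _ _ _ (hne b) (hos 0) (hos b) (hos (b+1)) (by ring)
    · rw [show ((0:ℕ):ℤ) - 1 = -1 by norm_num, dI_neg_one,
        show ((a+1:ℕ):ℤ) - 1 = ((a:ℕ):ℤ) by push_cast; ring, dI_coe,
        show a+1+0 = a+1 from by omega,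
        show a+1+2 = a+1+1+1 from by omega,
        qp_succ (a+1+1), qp_succ (a+1), qp_succ 0, qp_zero, qp_succ a]
      exact helper_sz (qp q a) _ _ _ _ _ _ _ (hne a) (hos 0) (hos a) (hos (a+1)) (by ring)
    · rw [show ((a+1:ℕ):ℤ) - 1 = ((a:ℕ):ℤ) by push_cast; ring, dI_coe,
        show ((b+1:ℕ):ℤ) - 1 = ((b:ℕ):ℤ) by push_cast; ring, dI_coe,
        show a+1+(b+1)+2 = a+1+(b+1)+1+1 from by omega,
        qp_succ (a+1+(b+1)+1), qp_succ (a+1+(b+1)),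
        qp_succ (a+1), qp_succ (b+1), qp_succ a, qp_succ b]
      exact branch_helper (qp q (a+1+(b+1))) (qp q a) (qp q b) _ _ _ _ _ _ _ _ _
        (hos a) (hos (a+1)) (hos b) (hos (b+1)) (by ring)
  · subst h
    simp only [cc]; push_cast
    rw [show (N:ℤ)+1+((N:ℤ)+1) = ((2*N+2:ℕ):ℤ) by push_cast; ring,
      show (N:ℤ)+1-((N:ℤ)+1) = ((0:ℕ):ℤ) by push_cast; ring,
      show (N:ℤ)+((N:ℤ)+1) = ((2*N+1:ℕ):ℤ) by push_cast; ring,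
      show (N:ℤ)-((N:ℤ)+1) = -1 by ring,
      show (N:ℤ)+((N:ℤ)+1-1) = ((2*N:ℕ):ℤ) by push_cast; ring,
      show (N:ℤ)-((N:ℤ)+1-1) = ((0:ℕ):ℤ) by push_cast; ring,
      show (N:ℤ)+((N:ℤ)+1+1) = ((2*N+2:ℕ):ℤ) by push_cast; ring,
      show (N:ℤ)-((N:ℤ)+1+1) = -2 by ring]
    simp only [dI_coe, dI_neg_one, dI_neg_two, zpow_natCast, pow_zero, qp_zero,
      show 2*(N+1) = 2*N+2 from by ring]
    field_simp
    simp only [mul_zero, zero_mul, zero_div, zero_add, add_zero, mul_one]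
    rw [div_self (hne _), div_self (hne _)]
  · simp only [cc]; push_cast
    rw [dI_neg (by omega : (N:ℤ)+1 - n < 0), dI_neg (by omega : (N:ℤ) - n < 0),
      dI_neg (by omega : (N:ℤ) - (n-1) < 0), dI_neg (by omega : (N:ℤ) - (n+1) < 0)]
    ring
def TT (n : ℤ) : ℤ := n*(n-1)/2

lemma TT_succ (n : ℤ) : TT (n+1) = TT n + n := by
  simp only [TT]
  rw [show (n+1)*(n+1-1) = n*(n-1) + 2*n by ring, Int.add_mul_ediv_left _ _ (two_ne_zero)]

lemma TT_pred (n : ℤ) : TT (n-1) = TT n + (1-n) := by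
  simp only [TT]
  rw [show (n-1)*(n-1-1) = n*(n-1) + 2*(1-n) by ring, Int.add_mul_ediv_left _ _ (two_ne_zero)]

noncomputable def ff (q x : ℂ) (N : ℕ) (n : ℤ) : ℂ := cc q N n * q ^ TT n * x ^ n

lemma cc_zero_of {q : ℂ} {N : ℕ} {n : ℤ} (h : (N:ℤ) < n ∨ n < -(N:ℤ)) : cc q N n = 0 := by
  rcases h with h | h
  · rw [cc, dI_neg (by omega : (N:ℤ) - n < 0), mul_zero]
  · rw [cc, dI_neg (by omega : (N:ℤ) + n < 0), mul_zero, zero_mul]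

lemma ff_summable (q x : ℂ) (N : ℕ) : Summable (ff q x N) := by
  apply summable_of_ne_finset_zero (s := Finset.Icc (-(N:ℤ)) N)
  intro n hn
  simp only [Finset.mem_Icc, not_and_or, not_le] at hn
  rw [ff, cc_zero_of (by omega), zero_mul, zero_mul]

lemma finId {q x : ℂ} (hq0 : q ≠ 0) (hq1 : ‖q‖ < 1) (hx : x ≠ 0) (N : ℕ) :
    ∏ j ∈ Finset.range N, ((1 + x*q^j) * (1 + q^(j+1) * x⁻¹)) = ∑' n : ℤ, ff q x N n := by
  induction N with
  | zero =>
      rw [Finset.range_zero, Finset.prod_empty]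
      rw [tsum_eq_single 0 (fun n hn => by
        rw [ff, cc_zero_of (by omega : (0:ℤ) < n ∨ n < -(0:ℤ)), zero_mul, zero_mul])]
      rw [ff, show TT 0 = 0 from rfl, zpow_zero, zpow_zero, cc,
        show ((0:ℕ):ℤ) + 0 = ((0:ℕ):ℤ) by ring, show ((0:ℕ):ℤ) - 0 = ((0:ℕ):ℤ) by ring,
        dI_coe, qp_zero]
      norm_num [qp_zero]
  | succ N ih =>
      rw [Finset.prod_range_succ, ih]
      have hexp : (1 + x*q^N) * (1 + q^(N+1) * x⁻¹)
          = (1 + q^(2*N+1)) + x*q^N + q^(N+1) * x⁻¹ := by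
        field_simp
        ring
      rw [hexp]
      have h1 : Summable (fun n : ℤ => (1 + q^(2*N+1)) * ff q x N n) :=
        (ff_summable q x N).mul_left _
      have h2 : Summable (fun n : ℤ => cc q N (n-1) * q ^ (TT n + (N:ℤ) + 1 - n) * x ^ n) := by
        apply summable_of_ne_finset_zero (s := Finset.Icc (-(N:ℤ)-1) ((N:ℤ)+1))
        intro n hn
        simp only [Finset.mem_Icc, not_and_or, not_le] at hn
        rw [cc_zero_of (by omega), zero_mul, zero_mul]
      have h3 : Summable (fun n : ℤ => cc q N (n+1) * q ^ (TT n + (N:ℤ) + 1 + n) * x ^ n) := by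
        apply summable_of_ne_finset_zero (s := Finset.Icc (-(N:ℤ)-1) ((N:ℤ)+1))
        intro n hn
        simp only [Finset.mem_Icc, not_and_or, not_le] at hn
        rw [cc_zero_of (by omega), zero_mul, zero_mul]
      have e2 : (x*q^N) * ∑' n : ℤ, ff q x N n
          = ∑' n : ℤ, cc q N (n-1) * q ^ (TT n + (N:ℤ) + 1 - n) * x ^ n := by
        rw [← tsum_mul_left]
        rw [← (Equiv.addRight (1:ℤ)).tsum_eq
          (fun n => cc q N (n-1) * q ^ (TT n + (N:ℤ) + 1 - n) * x ^ n)]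
        congr 1; funext n
        simp only [Equiv.coe_addRight, add_sub_cancel_right]
        rw [TT_succ, ff, show TT n + n + (N:ℤ) + 1 - (n+1) = TT n + (N:ℤ) by ring,
          zpow_add₀ hq0, zpow_add_one₀ hx, zpow_natCast]
        ring
      have e3 : (q^(N+1)*x⁻¹) * ∑' n : ℤ, ff q x N n
          = ∑' n : ℤ, cc q N (n+1) * q ^ (TT n + (N:ℤ) + 1 + n) * x ^ n := by
        rw [← tsum_mul_left]
        rw [← (Equiv.subRight (1:ℤ)).tsum_eq
          (fun n => cc q N (n+1) * q ^ (TT n + (N:ℤ) + 1 + n) * x ^ n)]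
        congr 1; funext n
        simp only [Equiv.subRight_apply, sub_add_cancel]
        rw [TT_pred, ff, show TT n + (1-n) + (N:ℤ) + 1 + (n-1) = TT n + ((N:ℤ)+1) by ring,
          zpow_add₀ hq0, zpow_sub_one₀ hx, show ((N:ℤ)+1) = ((N+1:ℕ):ℤ) by push_cast; ring,
          zpow_natCast]
        ring
      have expand : (∑' n : ℤ, ff q x N n) * (1 + q^(2*N+1) + x*q^N + q^(N+1)*x⁻¹)
          = (1 + q^(2*N+1)) * ∑' n : ℤ, ff q x N n
            + (x*q^N) * ∑' n : ℤ, ff q x N n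
            + (q^(N+1)*x⁻¹) * ∑' n : ℤ, ff q x N n := by ring
      rw [expand, e2, e3, ← tsum_mul_left]
      rw [← Summable.tsum_add h1 h2, ← Summable.tsum_add (h1.add h2) h3]
      congr 1; funext n
      simp only [ff]
      rw [cc_recur hq0 hq1 N n]
      rw [show q ^ (TT n + (N:ℤ) + 1 - n) = q ^ ((N:ℤ)+1-n) * q ^ (TT n) by
            rw [← zpow_add₀ hq0]; ring_nf,
          show q ^ (TT n + (N:ℤ) + 1 + n) = q ^ ((N:ℤ)+1+n) * q ^ (TT n) by
            rw [← zpow_add₀ hq0]; ring_nf]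
      ring

section Limits
variable {q x : ℂ}

lemma log_summable (a : ℂ) (hq1 : ‖q‖ < 1) :
    Summable (fun n : ℕ => Complex.log (1 - a * q ^ n)) := by
  refine Summable.of_norm_bounded_eventually (g := fun n => 3/2 * (‖a‖ * ‖q‖^n)) ?_ ?_
  · exact ((summable_geometric_of_lt_one (norm_nonneg q) hq1).mul_left _).mul_left _
  · rw [Nat.cofinite_eq_atTop]
    have ht : Filter.Tendsto (fun n : ℕ => ‖a * q ^ n‖) atTop (nhds 0) := by
      simp only [norm_mul, norm_pow]
      simpa using (tendsto_pow_atTop_nhds_zero_of_lt_one (norm_nonneg q) hq1).const_mul ‖a‖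
    filter_upwards [ht.eventually_le_const (by norm_num : (0:ℝ) < 1/2)] with n hn
    calc ‖Complex.log (1 - a * q ^ n)‖
        = ‖Complex.log (1 + -(a * q ^ n))‖ := by rw [sub_eq_add_neg]
      _ ≤ 3/2 * ‖-(a * q ^ n)‖ := Complex.norm_log_one_add_half_le_self (by rwa [norm_neg])
      _ = 3/2 * (‖a‖ * ‖q‖^n) := by rw [norm_neg, norm_mul, norm_pow]

lemma hasProd_one_sub (a : ℂ) (hq1 : ‖q‖ < 1) (h : ∀ n : ℕ, (1:ℂ) - a * q ^ n ≠ 0) :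
    HasProd (fun n : ℕ => 1 - a * q ^ n) (∏' n : ℕ, (1 - a * q ^ n)) :=
  (Complex.hasProd_of_hasSum_log h (log_summable a hq1).hasSum).multipliable.hasProd

lemma tendsto_partialProd (a : ℂ) (hq1 : ‖q‖ < 1) :
    Filter.Tendsto (fun N : ℕ => ∏ j ∈ Finset.range N, (1 - a * q ^ j)) atTop
      (nhds (∏' n : ℕ, (1 - a * q ^ n))) := by
  by_cases hz : ∀ n : ℕ, (1:ℂ) - a * q ^ n ≠ 0
  · exact (hasProd_one_sub a hq1 hz).tendsto_prod_nat
  · push_neg at hz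
    obtain ⟨j₀, hj₀⟩ := hz
    have hp : HasProd (fun n : ℕ => 1 - a * q ^ n) 0 := by
      rw [HasProd]
      refine Filter.Tendsto.congr' ?_ tendsto_const_nhds
      filter_upwards [eventually_ge_atTop ({j₀} : Finset ℕ)] with s hs
      exact (Finset.prod_eq_zero (hs (Finset.mem_singleton_self j₀)) hj₀).symm
    rw [hp.tprod_eq]
    refine Filter.Tendsto.congr' ?_ tendsto_const_nhds
    filter_upwards [eventually_ge_atTop (j₀+1)] with N hN
    exact (Finset.prod_eq_zero (Finset.mem_range.2 (by omega)) hj₀).symm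

lemma G_ne_zero (hq1 : ‖q‖ < 1) : (∏' n : ℕ, (1 - q * q ^ n)) ≠ 0 := by
  have hfac : ∀ n : ℕ, (1:ℂ) - q * q ^ n ≠ 0 := by
    intro n
    have := one_sub_pow_ne hq1 n
    rwa [pow_succ, mul_comm (q^n) q] at this
  have h2 := Complex.cexp_tsum_eq_tprod (f := fun n : ℕ => 1 - q * q ^ n) hfac (log_summable q hq1)
  rw [← h2]
  exact Complex.exp_ne_zero _

lemma qp_tendsto (hq1 : ‖q‖ < 1) :
    Filter.Tendsto (fun m : ℕ => qp q m) atTop (nhds (∏' n : ℕ, (1 - q * q ^ n))) := by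
  apply (tendsto_partialProd q hq1).congr
  intro N
  exact (Finset.prod_congr rfl (fun j _ => by rw [pow_succ, mul_comm (q^j) q])).symm

lemma exp_aux {r t : ℝ} (h0 : 0 ≤ t) (htr : t ≤ r) (hr : r < 1) :
    Real.exp (-(t/(1-r))) ≤ 1 - t := by
  set u := t/(1-r) with hu
  have h1r : 0 < 1 - r := by linarith
  have hu0 : 0 ≤ u := div_nonneg h0 (le_of_lt h1r)
  have hur : u * (1-r) = t := by rw [hu, div_mul_cancel₀ _ (ne_of_gt h1r)]
  have he : 1 + u ≤ Real.exp u := by linarith [Real.add_one_le_exp u]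
  have hprod : Real.exp (-u) * Real.exp u = 1 := by
    rw [← Real.exp_add, neg_add_cancel, Real.exp_zero]
  have hpos : 0 < Real.exp (-u) := Real.exp_pos _
  nlinarith [mul_le_mul_of_nonneg_left he (le_of_lt hpos)]

lemma sum_pow_le (hq1 : ‖q‖ < 1) (m : ℕ) :
    ∑ j ∈ Finset.range m, ‖q‖^(j+1) ≤ ‖q‖ * (1-‖q‖)⁻¹ := by
  have h : ∑ j ∈ Finset.range m, ‖q‖^(j+1) = ‖q‖ * ∑ j ∈ Finset.range m, ‖q‖^j := by
    rw [Finset.mul_sum]; exact Finset.sum_congr rfl fun j _ => by rw [pow_succ, mul_comm]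
  rw [h]
  apply mul_le_mul_of_nonneg_left _ (norm_nonneg q)
  calc ∑ j ∈ Finset.range m, ‖q‖^j ≤ ∑' j : ℕ, ‖q‖^j :=
        Summable.sum_le_tsum _ (fun i _ => pow_nonneg (norm_nonneg q) i)
          (summable_geometric_of_lt_one (norm_nonneg q) hq1)
    _ = (1-‖q‖)⁻¹ := tsum_geometric_of_lt_one (norm_nonneg q) hq1

lemma qp_norm_ge (hq1 : ‖q‖ < 1) (m : ℕ) :
    Real.exp (-(‖q‖ * (1-‖q‖)⁻¹ / (1-‖q‖))) ≤ ‖qp q m‖ := by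
  have h1r : 0 < 1 - ‖q‖ := by linarith
  have step1 : ∀ j : ℕ, Real.exp (-(‖q‖^(j+1)/(1-‖q‖))) ≤ ‖(1:ℂ) - q^(j+1)‖ := by
    intro j
    have h2 : ‖q‖^(j+1) ≤ ‖q‖ :=
      pow_le_of_le_one (norm_nonneg q) (le_of_lt hq1) (Nat.succ_ne_zero j)
    calc Real.exp (-(‖q‖^(j+1)/(1-‖q‖))) ≤ 1 - ‖q‖^(j+1) := exp_aux (by positivity) h2 hq1
      _ = ‖(1:ℂ)‖ - ‖q^(j+1)‖ := by rw [norm_one, norm_pow]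
      _ ≤ ‖(1:ℂ) - q^(j+1)‖ := norm_sub_norm_le _ _
  calc Real.exp (-(‖q‖ * (1-‖q‖)⁻¹ / (1-‖q‖)))
      ≤ Real.exp (-((∑ j ∈ Finset.range m, ‖q‖^(j+1))/(1-‖q‖))) := by
        rw [Real.exp_le_exp, neg_le_neg_iff]
        gcongr
        exact sum_pow_le hq1 m
    _ = ∏ j ∈ Finset.range m, Real.exp (-(‖q‖^(j+1)/(1-‖q‖))) := by
        rw [← Real.exp_sum]
        congr 1
        simp only [neg_div, Finset.sum_neg_distrib, Finset.sum_div]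
    _ ≤ ∏ j ∈ Finset.range m, ‖(1:ℂ) - q^(j+1)‖ :=
        Finset.prod_le_prod (fun j _ => (Real.exp_pos _).le) (fun j _ => step1 j)
    _ = ‖qp q m‖ := (norm_prod _ _).symm

lemma qp_norm_le (hq1 : ‖q‖ < 1) (m : ℕ) :
    ‖qp q m‖ ≤ Real.exp (‖q‖ * (1-‖q‖)⁻¹) := by
  calc ‖qp q m‖ = ∏ j ∈ Finset.range m, ‖(1:ℂ) - q^(j+1)‖ := norm_prod _ _
    _ ≤ ∏ j ∈ Finset.range m, Real.exp (‖q‖^(j+1)) := by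
        apply Finset.prod_le_prod (fun j _ => norm_nonneg _)
        intro j _
        calc ‖(1:ℂ) - q^(j+1)‖ ≤ ‖(1:ℂ)‖ + ‖q^(j+1)‖ := norm_sub_le _ _
          _ = 1 + ‖q‖^(j+1) := by rw [norm_one, norm_pow]
          _ ≤ Real.exp (‖q‖^(j+1)) := by linarith [Real.add_one_le_exp (‖q‖^(j+1))]
    _ = Real.exp (∑ j ∈ Finset.range m, ‖q‖^(j+1)) := (Real.exp_sum _ _).symm
    _ ≤ Real.exp (‖q‖ * (1-‖q‖)⁻¹) := Real.exp_le_exp.2 (sum_pow_le hq1 m)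

end Limits
section Final
variable {q x : ℂ}

lemma TT_nonneg (n : ℤ) : 0 ≤ TT n := by
  rw [TT]
  apply Int.ediv_nonneg _ (by norm_num)
  rcases le_or_gt 1 n with h | h
  · exact mul_nonneg (by omega) (by omega)
  · have h1 : n ≤ 0 := by omega
    have := mul_nonneg (by omega : (0:ℤ) ≤ -n) (by omega : (0:ℤ) ≤ 1-n)
    nlinarith

lemma dI_norm_le (hq1 : ‖q‖ < 1) (m : ℤ) :
    ‖dI q m‖ ≤ (Real.exp (-(‖q‖ * (1-‖q‖)⁻¹ / (1-‖q‖))))⁻¹ := by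
  rw [dI]
  split
  · rw [norm_inv]
    exact inv_anti₀ (Real.exp_pos _) (qp_norm_ge hq1 _)
  · simp only [norm_zero]
    positivity

lemma cc_norm_le (hq1 : ‖q‖ < 1) (N : ℕ) (n : ℤ) :
    ‖cc q N n‖ ≤ Real.exp (‖q‖ * (1-‖q‖)⁻¹) *
      ((Real.exp (-(‖q‖ * (1-‖q‖)⁻¹ / (1-‖q‖))))⁻¹ *
        (Real.exp (-(‖q‖ * (1-‖q‖)⁻¹ / (1-‖q‖))))⁻¹) := by
  rw [cc, norm_mul, norm_mul, mul_assoc]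
  have h1 := qp_norm_le hq1 (2*N)
  have h2 := dI_norm_le hq1 ((N:ℤ)+n)
  have h3 := dI_norm_le hq1 ((N:ℤ)-n)
  gcongr

lemma norm_zpow_le_max (hx : x ≠ 0) (n : ℤ) :
    ‖x ^ n‖ ≤ (max ‖x‖ ‖x‖⁻¹) ^ n.natAbs := by
  rw [norm_zpow]
  rcases Int.natAbs_eq n with h | h
  · rw [h, Int.natAbs_natCast, zpow_natCast]
    exact pow_le_pow_left₀ (norm_nonneg x) (le_max_left _ _) _
  · rw [h, Int.natAbs_neg, Int.natAbs_natCast, zpow_neg, zpow_natCast, ← inv_pow]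
    exact pow_le_pow_left₀ (inv_nonneg.2 (norm_nonneg x)) (le_max_right _ _) _

lemma ratio_summable (r M : ℝ) (hr0 : 0 ≤ r) (hr1 : r < 1) (hM : 0 ≤ M)
    (T : ℕ → ℕ) (hT : ∀ k, T k + k ≤ T (k+1)) :
    Summable (fun k : ℕ => r ^ (T k) * M ^ k) := by
  apply summable_of_ratio_norm_eventually_le (r := 1/2) (by norm_num)
  have ht : Filter.Tendsto (fun k : ℕ => r ^ k * M) atTop (nhds 0) := by
    simpa using (tendsto_pow_atTop_nhds_zero_of_lt_one hr0 hr1).mul_const M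
  filter_upwards [ht.eventually_le_const (by norm_num : (0:ℝ) < 1/2)] with k hk
  rw [Real.norm_of_nonneg (by positivity), Real.norm_of_nonneg (by positivity)]
  calc r ^ (T (k+1)) * M ^ (k+1)
      ≤ r ^ (T k + k) * M ^ (k+1) := by
        apply mul_le_mul_of_nonneg_right _ (by positivity)
        exact pow_le_pow_of_le_one hr0 (le_of_lt hr1) (hT k)
    _ = (r ^ k * M) * (r ^ (T k) * M ^ k) := by rw [pow_add, pow_succ]; ring
    _ ≤ 1/2 * (r ^ (T k) * M ^ k) := by
        apply mul_le_mul_of_nonneg_right hk (by positivity)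

lemma bnd_summable (hq1 : ‖q‖ < 1) (hx : x ≠ 0) :
    Summable (fun n : ℤ => ‖q‖ ^ (TT n).toNat * (max ‖x‖ ‖x‖⁻¹) ^ n.natAbs) := by
  set M := max ‖x‖ ‖x‖⁻¹ with hM
  have hM0 : 0 ≤ M := le_trans (norm_nonneg x) (le_max_left _ _)
  apply Summable.of_nat_of_neg
  · apply Summable.congr (ratio_summable ‖q‖ M (norm_nonneg q) hq1 hM0
      (fun k => (TT (k:ℤ)).toNat) ?_)
    · intro k
      simp [Int.natAbs_natCast]
    · intro k
      have h1 := TT_nonneg (k:ℤ)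
      have h2 := TT_succ (k:ℤ)
      show (TT (k:ℤ)).toNat + k ≤ (TT ((k+1:ℕ):ℤ)).toNat
      rw [show ((k+1:ℕ):ℤ) = (k:ℤ)+1 by push_cast; ring]
      omega
  · apply Summable.congr (ratio_summable ‖q‖ M (norm_nonneg q) hq1 hM0
      (fun k => (TT (-(k:ℤ))).toNat) ?_)
    · intro k
      simp [Int.natAbs_neg, Int.natAbs_natCast]
    · intro k
      have h1 := TT_nonneg (-(k:ℤ))
      have h2 := TT_pred (-(k:ℤ))
      show (TT (-(k:ℤ))).toNat + k ≤ (TT (-((k+1:ℕ):ℤ))).toNat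
      rw [show -((k+1:ℕ):ℤ) = -(k:ℤ)-1 by push_cast; ring]
      omega

lemma ff_norm_le (hq1 : ‖q‖ < 1) (hx : x ≠ 0) (N : ℕ) (n : ℤ) :
    ‖ff q x N n‖ ≤ (Real.exp (‖q‖ * (1-‖q‖)⁻¹) *
      ((Real.exp (-(‖q‖ * (1-‖q‖)⁻¹ / (1-‖q‖))))⁻¹ *
        (Real.exp (-(‖q‖ * (1-‖q‖)⁻¹ / (1-‖q‖))))⁻¹)) *
      (‖q‖ ^ (TT n).toNat * (max ‖x‖ ‖x‖⁻¹) ^ n.natAbs) := by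
  rw [ff, norm_mul, norm_mul]
  have h1 := cc_norm_le hq1 N n
  have h2 : ‖q ^ TT n‖ = ‖q‖ ^ (TT n).toNat := by
    rw [norm_zpow, ← Int.toNat_of_nonneg (TT_nonneg n), zpow_natCast, Int.toNat_of_nonneg
      (TT_nonneg n)]
  have h3 := norm_zpow_le_max hx n
  rw [mul_assoc]
  apply mul_le_mul h1 _ (by positivity) (by positivity)
  rw [h2]
  exact mul_le_mul_of_nonneg_left h3 (by positivity)

lemma cc_tendsto (hq1 : ‖q‖ < 1) (n : ℤ) :
    Filter.Tendsto (fun N : ℕ => cc q N n) atTop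
      (nhds ((∏' k : ℕ, (1 - q * q ^ k))⁻¹)) := by
  set G := ∏' k : ℕ, (1 - q * q ^ k) with hG
  have hGne := G_ne_zero hq1
  have t2 : Filter.Tendsto (fun N : ℕ => 2*N) atTop atTop :=
    Filter.tendsto_atTop_atTop_of_monotone (fun _ _ h => by omega) (fun b => ⟨b, by omega⟩)
  have tp : Filter.Tendsto (fun N : ℕ => ((N:ℤ)+n).toNat) atTop atTop := by
    apply Filter.tendsto_atTop.2
    intro b
    rw [Filter.eventually_atTop]
    exact ⟨b + n.natAbs, fun N hN => by omega⟩
  have tm : Filter.Tendsto (fun N : ℕ => ((N:ℤ)-n).toNat) atTop atTop := by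
    apply Filter.tendsto_atTop.2
    intro b
    rw [Filter.eventually_atTop]
    exact ⟨b + n.natAbs, fun N hN => by omega⟩
  have main : Filter.Tendsto
      (fun N : ℕ => qp q (2*N) * (qp q ((N:ℤ)+n).toNat)⁻¹ * (qp q ((N:ℤ)-n).toNat)⁻¹)
      atTop (nhds (G * G⁻¹ * G⁻¹)) :=
    (((qp_tendsto hq1).comp t2).mul (((qp_tendsto hq1).comp tp).inv₀ hGne)).mul
      (((qp_tendsto hq1).comp tm).inv₀ hGne)
  rw [show G * G⁻¹ * G⁻¹ = G⁻¹ by rw [mul_inv_cancel₀ hGne, one_mul]] at main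
  apply Filter.Tendsto.congr' _ main
  filter_upwards [eventually_ge_atTop n.natAbs] with N hN
  rw [cc, dI, if_pos (by omega : (0:ℤ) ≤ (N:ℤ)+n), dI, if_pos (by omega : (0:ℤ) ≤ (N:ℤ)-n)]

end Final
end JTP

/-- Jacobi theta function `θ_q(x) = Σ_{n∈ℤ} q^{n(n-1)/2} x^n`. -/
noncomputable def jTheta (q x : ℂ) : ℂ := ∑' n : ℤ, q ^ (n * (n - 1) / 2) * x ^ n

/-- Infinite q-Pochhammer symbol `(a;q)_∞ = Π_{n≥0} (1 - a q^n)`. -/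
noncomputable def qPochInf (a q : ℂ) : ℂ := ∏' n : ℕ, (1 - a * q ^ n)

/-- Jacobi's triple product identity. -/
theorem jacobi_triple_product (q x : ℂ) (hq0 : 0 < ‖q‖) (hq1 : ‖q‖ < 1) (hx : x ≠ 0) :
    jTheta q x = qPochInf q q * qPochInf (-x) q * qPochInf (-q / x) q := by
  have hq0' : q ≠ 0 := by
    intro h; rw [h, norm_zero] at hq0; exact lt_irrefl 0 hq0
  set G := ∏' k : ℕ, (1 - q * q ^ k) with hG
  have hGne : G ≠ 0 := JTP.G_ne_zero hq1
  -- pointwise limits of the summands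
  have hpt : ∀ n : ℤ, Filter.Tendsto (fun N : ℕ => JTP.ff q x N n) Filter.atTop
      (nhds (G⁻¹ * (q ^ JTP.TT n * x ^ n))) := by
    intro n
    have h := ((JTP.cc_tendsto hq1 n).mul_const (q ^ JTP.TT n)).mul_const (x ^ n)
    rw [show G⁻¹ * (q ^ JTP.TT n * x ^ n) = G⁻¹ * q ^ JTP.TT n * x ^ n by ring]
    exact h.congr (fun N => by rw [JTP.ff])
  -- dominated convergence (Tannery)
  have htan := tendsto_tsum_of_dominated_convergence
    (f := fun (N : ℕ) (n : ℤ) => JTP.ff q x N n)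
    (g := fun n : ℤ => G⁻¹ * (q ^ JTP.TT n * x ^ n))
    (bound := fun n : ℤ => (Real.exp (‖q‖ * (1-‖q‖)⁻¹) *
      ((Real.exp (-(‖q‖ * (1-‖q‖)⁻¹ / (1-‖q‖))))⁻¹ *
        (Real.exp (-(‖q‖ * (1-‖q‖)⁻¹ / (1-‖q‖))))⁻¹)) *
      (‖q‖ ^ (JTP.TT n).toNat * (max ‖x‖ ‖x‖⁻¹) ^ n.natAbs))
    ((JTP.bnd_summable hq1 hx).mul_left _) hpt
    (Filter.Eventually.of_forall (fun N n => JTP.ff_norm_le hq1 hx N n))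
  have hsum_eq : (∑' n : ℤ, G⁻¹ * (q ^ JTP.TT n * x ^ n)) = G⁻¹ * jTheta q x := by
    rw [tsum_mul_left]
    congr 1
  rw [hsum_eq] at htan
  -- limit of the partial products
  have hA := JTP.tendsto_partialProd (q := q) (-x) hq1
  have hB := JTP.tendsto_partialProd (q := q) (-q/x) hq1
  have hcong : ∀ N : ℕ,
      (∏ j ∈ Finset.range N, (1 - (-x) * q ^ j)) *
        (∏ j ∈ Finset.range N, (1 - (-q/x) * q ^ j))
      = ∏ j ∈ Finset.range N, ((1 + x * q ^ j) * (1 + q ^ (j+1) * x⁻¹)) := by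
    intro N
    rw [← Finset.prod_mul_distrib]
    refine Finset.prod_congr rfl (fun j _ => ?_)
    congr 1
    · ring
    · field_simp
      ring
  have hLHS := ((hA.mul hB).congr hcong).congr (fun N => JTP.finId hq0' hq1 hx N)
  have key : (∏' n : ℕ, (1 - (-x) * q ^ n)) * (∏' n : ℕ, (1 - (-q/x) * q ^ n))
      = G⁻¹ * jTheta q x := tendsto_nhds_unique hLHS htan
  calc jTheta q x = G * (G⁻¹ * jTheta q x) := by
        rw [← mul_assoc, mul_inv_cancel₀ hGne, one_mul]
    _ = G * ((∏' n : ℕ, (1 - (-x) * q ^ n)) * (∏' n : ℕ, (1 - (-q/x) * q ^ n))) := by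
        rw [key]
    _ = qPochInf q q * qPochInf (-x) q * qPochInf (-q / x) q := by
        unfold qPochInf
        rw [hG]
        ring
end

section
/- Let 0 < |q| < 1 and suppose u(x) satisfies the q-Airy equation u(q²x) + x u(qx) − u(x) = 0 on ℂ*. Then the function v(x) = (θ_q(q²x)/θ_q(−q²x)) · u(−x) also satisfies the same equation, wherever θ_q(−q²x) ≠ 0. -/
lemma jTheta_shift (q : ℂ) (hq : q ≠ 0) (y : ℂ) (hy : y ≠ 0) :
    jTheta q (q * y) = y⁻¹ * jTheta q y := by
  unfold jTheta
  rw [← tsum_mul_left,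
    ← (Equiv.addRight (1:ℤ)).tsum_eq fun n : ℤ => y⁻¹ * (q ^ (n * (n - 1) / 2) * y ^ n)]
  refine tsum_congr fun n => ?_
  simp only [Equiv.coe_addRight]
  have he : (n + 1) * (n + 1 - 1) / 2 = n * (n - 1) / 2 + n := by
    have h : (n + 1) * (n + 1 - 1) = n * (n - 1) + n * 2 := by ring
    rw [h, Int.add_mul_ediv_right _ _ (by norm_num : (2:ℤ) ≠ 0)]
  rw [he, zpow_add₀ hq, mul_zpow, zpow_add_one₀ hy]
  field_simp

theorem qAiry_second_solution (q : ℂ) (hq0 : 0 < ‖q‖) (hq1 : ‖q‖ < 1)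
    (u : ℂ → ℂ) (hu : ∀ x : ℂ, x ≠ 0 → u (q ^ 2 * x) + x * u (q * x) - u x = 0) :
    ∀ x : ℂ, x ≠ 0 → jTheta q (-(q ^ 2 * x)) ≠ 0 →
      (fun y => jTheta q (q ^ 2 * y) / jTheta q (-(q ^ 2 * y)) * u (-y)) (q ^ 2 * x)
        + x * (fun y => jTheta q (q ^ 2 * y) / jTheta q (-(q ^ 2 * y)) * u (-y)) (q * x)
        - (fun y => jTheta q (q ^ 2 * y) / jTheta q (-(q ^ 2 * y)) * u (-y)) x = 0 := by
  intro x hx hB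
  have hq : q ≠ 0 := norm_pos_iff.mp hq0
  have hqx : q ^ 2 * x ≠ 0 := mul_ne_zero (pow_ne_zero 2 hq) hx
  have hqqx : q ^ 2 * (q * x) ≠ 0 := mul_ne_zero (pow_ne_zero 2 hq) (mul_ne_zero hq hx)
  set A := jTheta q (q ^ 2 * x) with hA
  set B := jTheta q (-(q ^ 2 * x)) with hBdef
  -- values at q*x
  have h1 : jTheta q (q ^ 2 * (q * x)) = (q ^ 2 * x)⁻¹ * A := by
    rw [show q ^ 2 * (q * x) = q * (q ^ 2 * x) by ring]
    exact jTheta_shift q hq _ hqx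
  have h2 : jTheta q (-(q ^ 2 * (q * x))) = (-(q ^ 2 * x))⁻¹ * B := by
    rw [show -(q ^ 2 * (q * x)) = q * -(q ^ 2 * x) by ring]
    exact jTheta_shift q hq _ (neg_ne_zero.mpr hqx)
  -- values at q^2*x
  have h3 : jTheta q (q ^ 2 * (q ^ 2 * x)) = (q ^ 2 * (q * x))⁻¹ * ((q ^ 2 * x)⁻¹ * A) := by
    rw [show q ^ 2 * (q ^ 2 * x) = q * (q ^ 2 * (q * x)) by ring, jTheta_shift q hq _ hqqx, h1]
  have h4 : jTheta q (-(q ^ 2 * (q ^ 2 * x)))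
      = (-(q ^ 2 * (q * x)))⁻¹ * ((-(q ^ 2 * x))⁻¹ * B) := by
    rw [show -(q ^ 2 * (q ^ 2 * x)) = q * -(q ^ 2 * (q * x)) by ring,
      jTheta_shift q hq _ (neg_ne_zero.mpr hqqx), h2]
  have huw := hu (-x) (neg_ne_zero.mpr hx)
  rw [show q ^ 2 * (-x) = -(q ^ 2 * x) by ring, show q * (-x) = -(q * x) by ring] at huw
  simp only
  rw [h1, h2, h3, h4]
  have r1 : ((q ^ 2 * x)⁻¹ * A) / ((-(q ^ 2 * x))⁻¹ * B) = -(A / B) := by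
    field_simp
  have r2 : ((q ^ 2 * (q * x))⁻¹ * ((q ^ 2 * x)⁻¹ * A))
      / ((-(q ^ 2 * (q * x)))⁻¹ * ((-(q ^ 2 * x))⁻¹ * B)) = A / B := by
    field_simp
  rw [r1, r2]
  linear_combination (A / B) * huw
end

section
/- For 0 < |q| < 1 and all x ∈ ℂ*, the following connection formula holds between the Ramanujan function and the q-Airy function: A_{q²}(−q³/x²) = (1/((q;q)_∞ (−1;q)_∞)) · [ θ_q(x/q) · Ai_q(−x) + θ_q(−x/q) · Ai_q(x) ]. -/
/-- Finite q-Pochhammer symbol `(a;q)_n`. -/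
noncomputable def qPoch (a q : ℂ) (n : ℕ) : ℂ := ∏ k ∈ Finset.range n, (1 - a * q ^ k)

/-- The Ramanujan function `A_q(x)`. -/
noncomputable def ramanujanA (q x : ℂ) : ℂ := ∑' n : ℕ, q ^ (n ^ 2) / qPoch q q n * (-x) ^ n

/-- The q-Airy function `Ai_q(x)`. -/
noncomputable def qAiry (q x : ℂ) : ℂ :=
  ∑' n : ℕ, (-1) ^ n * q ^ (n * (n - 1) / 2) / (qPoch (-q) q n * qPoch q q n) * (-x) ^ n

open Complex Finset Filter Topology

lemma one_sub_ne' {w : ℂ} (h : ‖w‖ < 1) : (1 : ℂ) - w ≠ 0 := by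
  intro h0
  rw [sub_eq_zero] at h0
  rw [← h0] at h
  simp at h

lemma qPoch_succ (a q : ℂ) (n : ℕ) :
    qPoch a q (n + 1) = qPoch a q n * (1 - a * q ^ n) := Finset.prod_range_succ _ _

lemma qPoch_ne_zero {a q : ℂ} (h : ∀ k : ℕ, ‖a * q ^ k‖ < 1) (n : ℕ) :
    qPoch a q n ≠ 0 :=
  Finset.prod_ne_zero_iff.2 fun k _ => one_sub_ne' (h k)

lemma norm_q_mul_pow_lt_one {q : ℂ} (hq1 : ‖q‖ < 1) (k : ℕ) : ‖q * q ^ k‖ < 1 := by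
  rw [norm_mul, norm_pow]
  calc ‖q‖ * ‖q‖ ^ k ≤ ‖q‖ * 1 := by
        apply mul_le_mul_of_nonneg_left _ (norm_nonneg q)
        exact pow_le_one₀ (norm_nonneg q) hq1.le
    _ < 1 := by simpa using hq1

/-- The tail case: all factors have small norm. -/
lemma aux_tail {c t : ℂ} (ht : ‖t‖ < 1) (hc : ‖c‖ ≤ 1 / 2) :
    Multipliable (fun n : ℕ => 1 - c * t ^ n) ∧ (∏' n : ℕ, (1 - c * t ^ n)) ≠ 0 := by
  have hsmall : ∀ n : ℕ, ‖-(c * t ^ n)‖ ≤ 1 / 2 := by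
    intro n
    rw [norm_neg, norm_mul, norm_pow]
    calc ‖c‖ * ‖t‖ ^ n ≤ (1/2) * 1 := by
          apply mul_le_mul hc (pow_le_one₀ (norm_nonneg t) ht.le) (by positivity) (by norm_num)
      _ = 1/2 := by ring
  have hfn : ∀ (_ : Unit) (n : ℕ), (1 : ℂ) - c * t ^ n ≠ 0 := by
    intro _ n
    apply one_sub_ne'
    rw [norm_mul, norm_pow]
    calc ‖c‖ * ‖t‖ ^ n ≤ (1/2) * 1 := by
          apply mul_le_mul hc (pow_le_one₀ (norm_nonneg t) ht.le) (by positivity) (by norm_num)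
      _ < 1 := by norm_num
  have hlog : ∀ (_ : Unit), Summable fun n : ℕ => Complex.log (1 - c * t ^ n) := by
    intro _
    have hgeo : Summable (fun n : ℕ => (3/2 : ℝ) * (‖c‖ * ‖t‖ ^ n)) :=
      (((summable_geometric_of_lt_one (norm_nonneg t) ht)).mul_left ‖c‖).mul_left (3/2)
    refine Summable.of_norm_bounded hgeo ?_
    intro n
    have he : (1 : ℂ) - c * t ^ n = 1 + -(c * t ^ n) := by ring
    rw [he]
    have hb := Complex.norm_log_one_add_half_le_self (z := -(c * t ^ n)) (hsmall n)
    calc ‖Complex.log (1 + -(c * t ^ n))‖ ≤ 3/2 * ‖-(c * t ^ n)‖ := hb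
      _ = 3/2 * (‖c‖ * ‖t‖ ^ n) := by rw [norm_neg, norm_mul, norm_pow]
  constructor
  · exact Complex.multipliable_of_summable_log (hlog ())
  · have := Complex.cexp_tsum_eq_tprod (fun n => hfn () n) (hlog ())
    rw [← this]
    exact Complex.exp_ne_zero _

lemma exists_tail_small (c : ℂ) {t : ℂ} (ht : ‖t‖ < 1) : ∃ N : ℕ, ‖c * t ^ N‖ ≤ 1 / 2 := by
  have h0 : Tendsto (fun n : ℕ => ‖c‖ * ‖t‖ ^ n) atTop (𝓝 (‖c‖ * 0)) :=
    (tendsto_pow_atTop_nhds_zero_of_norm_lt_one (by simpa using ht)).const_mul _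
  rw [mul_zero] at h0
  have := h0.eventually_le_const (by norm_num : (0:ℝ) < 1/2)
  obtain ⟨N, hN⟩ := this.exists
  exact ⟨N, by rw [norm_mul, norm_pow]; exact hN⟩

lemma shift_form (c t : ℂ) (N : ℕ) :
    (fun n : ℕ => 1 - c * t ^ (n + N)) = fun n : ℕ => 1 - c * t ^ N * t ^ n := by
  funext n
  rw [pow_add]
  ring

lemma multipliable_one_sub (c : ℂ) {t : ℂ} (ht : ‖t‖ < 1) :
    Multipliable (fun n : ℕ => 1 - c * t ^ n) := by
  obtain ⟨N, hN⟩ := exists_tail_small c ht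
  apply Multipliable.comp_nat_add (k := N)
  rw [shift_form]
  exact (aux_tail ht hN).1

lemma tprod_split (c : ℂ) {t : ℂ} (ht : ‖t‖ < 1) (N : ℕ) :
    (∏ i ∈ Finset.range N, (1 - c * t ^ i)) * (∏' n : ℕ, (1 - c * t ^ N * t ^ n))
      = ∏' n : ℕ, (1 - c * t ^ n) := by
  have hm : Multipliable (fun n : ℕ => 1 - c * t ^ (n + N)) := by
    rw [shift_form]; exact multipliable_one_sub _ ht
  have := Multipliable.prod_mul_tprod_nat_mul' (f := fun n : ℕ => 1 - c * t ^ n) (k := N) hm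
  rw [← this]
  congr 1
  rw [← shift_form]

lemma tprod_one_sub_ne_zero {c t : ℂ} (ht : ‖t‖ < 1) (h : ∀ n : ℕ, c * t ^ n ≠ 1) :
    (∏' n : ℕ, (1 - c * t ^ n)) ≠ 0 := by
  obtain ⟨N, hN⟩ := exists_tail_small c ht
  rw [← tprod_split c ht N]
  apply mul_ne_zero
  · exact Finset.prod_ne_zero_iff.2 fun k _ => sub_ne_zero.2 fun hh => h k hh.symm
  · exact (aux_tail ht hN).2

lemma tprod_one_sub_eq_zero {c t : ℂ} (ht : ‖t‖ < 1) {n0 : ℕ} (h : c * t ^ n0 = 1) :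
    (∏' n : ℕ, (1 - c * t ^ n)) = 0 := by
  rw [← tprod_split c ht (n0 + 1)]
  apply mul_eq_zero_of_left
  apply Finset.prod_eq_zero (Finset.self_mem_range_succ n0)
  rw [h]; ring

/-! ### Euler's q-exponential identity -/

noncomputable def ec (Q : ℂ) (k : ℕ) : ℂ := (-1) ^ k * Q ^ (k * (k - 1) / 2) / qPoch Q Q k

lemma tri_succ (k : ℕ) : (k + 1) * ((k + 1) - 1) / 2 = k * (k - 1) / 2 + k :=
  Nat.triangle_succ k

lemma ec_zero (Q : ℂ) : ec Q 0 = 1 := by simp [ec, qPoch]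

lemma ec_rec {Q : ℂ} (hQ : ‖Q‖ < 1) (k : ℕ) :
    ec Q (k + 1) * (1 - Q * Q ^ k) = ec Q k * (-Q ^ k) := by
  have hP : qPoch Q Q k ≠ 0 := qPoch_ne_zero (norm_q_mul_pow_lt_one hQ) k
  have h1 : (1 : ℂ) - Q * Q ^ k ≠ 0 := one_sub_ne' (norm_q_mul_pow_lt_one hQ k)
  rw [ec, ec, qPoch_succ, tri_succ, pow_add, pow_succ]
  field_simp
  ring

lemma ec_ratio {Q : ℂ} (hQ : ‖Q‖ < 1) (z : ℂ) :
    ∀ᶠ k in Filter.atTop, ‖ec Q (k + 1) * z ^ (k + 1)‖ ≤ 1 / 2 * ‖ec Q k * z ^ k‖ := by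
  have h1Q : (0 : ℝ) < 1 - ‖Q‖ := by linarith
  have htend : Filter.Tendsto (fun k : ℕ => ‖Q‖ ^ k * ‖z‖) Filter.atTop (𝓝 (0 * ‖z‖)) :=
    (tendsto_pow_atTop_nhds_zero_of_norm_lt_one (by simpa using hQ)).mul_const _
  rw [zero_mul] at htend
  filter_upwards [htend.eventually_le_const (by linarith : (0:ℝ) < (1 - ‖Q‖) / 2)] with k hk
  have h1 : (1 : ℂ) - Q * Q ^ k ≠ 0 := one_sub_ne' (norm_q_mul_pow_lt_one hQ k)
  have key : ec Q (k + 1) * z ^ (k + 1)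
      = (ec Q k * z ^ k) * (-Q ^ k * z / (1 - Q * Q ^ k)) := by
    have := ec_rec hQ k
    rw [mul_div_assoc', eq_div_iff h1, pow_succ]
    linear_combination (z ^ k * z) * this
  rw [key, norm_mul]
  rw [mul_comm (1/2 : ℝ)]
  apply mul_le_mul_of_nonneg_left _ (norm_nonneg _)
  rw [norm_div, norm_mul, norm_neg, norm_pow]
  have hden : 1 - ‖Q‖ ≤ ‖1 - Q * Q ^ k‖ := by
    have h2 : ‖Q * Q ^ k‖ ≤ ‖Q‖ := by
      rw [norm_mul, norm_pow]
      calc ‖Q‖ * ‖Q‖ ^ k ≤ ‖Q‖ * 1 := by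
            apply mul_le_mul_of_nonneg_left (pow_le_one₀ (norm_nonneg Q) hQ.le) (norm_nonneg Q)
        _ = ‖Q‖ := mul_one _
    calc 1 - ‖Q‖ ≤ 1 - ‖Q * Q ^ k‖ := by linarith
      _ ≤ ‖1 - Q * Q ^ k‖ := by
          have := norm_sub_norm_le (1 : ℂ) (Q * Q ^ k)
          simpa using this
  rw [div_le_iff₀ (lt_of_lt_of_le h1Q hden)]
  calc ‖Q‖ ^ k * ‖z‖ ≤ (1 - ‖Q‖) / 2 := hk
    _ ≤ 1 / 2 * ‖1 - Q * Q ^ k‖ := by linarith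

lemma euler_summable {Q : ℂ} (hQ : ‖Q‖ < 1) (z : ℂ) :
    Summable (fun k : ℕ => ec Q k * z ^ k) :=
  summable_of_ratio_norm_eventually_le (by norm_num : (1:ℝ)/2 < 1) (ec_ratio hQ z)

lemma euler_summable_norm {Q : ℂ} (hQ : ‖Q‖ < 1) (z : ℂ) :
    Summable (fun k : ℕ => ‖ec Q k * z ^ k‖) := by
  apply summable_of_ratio_norm_eventually_le (by norm_num : (1:ℝ)/2 < 1)
  filter_upwards [ec_ratio hQ z] with k hk
  simpa using hk

noncomputable def eulerF (Q z : ℂ) : ℂ := ∑' k : ℕ, ec Q k * z ^ k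

set_option maxHeartbeats 1000000 in
lemma euler_funcEq {Q : ℂ} (hQ : ‖Q‖ < 1) (z : ℂ) :
    eulerF Q z = (1 - z) * eulerF Q (Q * z) := by
  have S0 := euler_summable hQ z
  have S1 := euler_summable hQ (Q * z)
  have S1' : Summable (fun k : ℕ => ec Q (k + 1) * (Q * z) ^ (k + 1)) :=
    (summable_nat_add_iff 1).2 S1
  have S2 : Summable (fun k : ℕ => z * (ec Q k * (Q * z) ^ k)) := S1.mul_left z
  have hzF : z * eulerF Q (Q * z) = ∑' k : ℕ, z * (ec Q k * (Q * z) ^ k) :=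
    (tsum_mul_left (a := z) (f := fun k : ℕ => ec Q k * (Q * z) ^ k)).symm
  have hsplit : eulerF Q (Q * z) = ec Q 0 + ∑' k : ℕ, ec Q (k + 1) * (Q * z) ^ (k + 1) := by
    have := Summable.tsum_eq_zero_add S1
    simpa [eulerF] using this
  have hterm : ∀ k : ℕ,
      ec Q (k + 1) * (Q * z) ^ (k + 1) - z * (ec Q k * (Q * z) ^ k)
        = ec Q (k + 1) * z ^ (k + 1) := by
    intro k
    have hr := ec_rec hQ k
    have : (Q * z) ^ (k + 1) = Q * Q ^ k * (z ^ k * z) := by ring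
    rw [this]
    have h2 : (Q * z) ^ k = Q ^ k * z ^ k := mul_pow Q z k
    rw [h2, pow_succ]
    linear_combination (-(z ^ k * z)) * hr
  have hsub : (∑' k : ℕ, ec Q (k + 1) * (Q * z) ^ (k + 1)) - ∑' k : ℕ, z * (ec Q k * (Q * z) ^ k)
      = ∑' k : ℕ, ec Q (k + 1) * z ^ (k + 1) := by
    rw [← Summable.tsum_sub S1' S2]
    exact tsum_congr hterm
  have hFz : eulerF Q z = ec Q 0 + ∑' k : ℕ, ec Q (k + 1) * z ^ (k + 1) := by
    have := Summable.tsum_eq_zero_add S0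
    simpa [eulerF] using this
  calc eulerF Q z = ec Q 0 + ∑' k : ℕ, ec Q (k + 1) * z ^ (k + 1) := hFz
    _ = ec Q 0 + ((∑' k : ℕ, ec Q (k + 1) * (Q * z) ^ (k + 1))
          - ∑' k : ℕ, z * (ec Q k * (Q * z) ^ k)) := by rw [hsub]
    _ = (ec Q 0 + ∑' k : ℕ, ec Q (k + 1) * (Q * z) ^ (k + 1))
          - z * eulerF Q (Q * z) := by rw [hzF]; ring
    _ = eulerF Q (Q * z) - z * eulerF Q (Q * z) := by rw [← hsplit]
    _ = (1 - z) * eulerF Q (Q * z) := by ring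

lemma euler_iter {Q : ℂ} (hQ : ‖Q‖ < 1) (z : ℂ) (N : ℕ) :
    eulerF Q z = (∏ i ∈ Finset.range N, (1 - z * Q ^ i)) * eulerF Q (Q ^ N * z) := by
  induction N with
  | zero => simp
  | succ n ih =>
      rw [ih, Finset.prod_range_succ, euler_funcEq hQ (Q ^ n * z)]
      have h1 : Q * (Q ^ n * z) = Q ^ (n + 1) * z := by ring
      have h2 : (1 : ℂ) - Q ^ n * z = 1 - z * Q ^ n := by ring
      rw [h1, h2]
      ring

lemma euler_tendsto_one {Q : ℂ} (hQ : ‖Q‖ < 1) (z : ℂ) :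
    Filter.Tendsto (fun N : ℕ => eulerF Q (Q ^ N * z)) Filter.atTop (𝓝 1) := by
  have hbd := euler_summable_norm hQ z
  have key := tendsto_tsum_of_dominated_convergence (𝓕 := Filter.atTop)
    (f := fun (N : ℕ) (k : ℕ) => ec Q k * (Q ^ N * z) ^ k)
    (g := fun k : ℕ => if k = 0 then 1 else 0)
    (bound := fun k : ℕ => ‖ec Q k * z ^ k‖) hbd ?_ ?_
  · have hg : (∑' k : ℕ, if k = 0 then (1:ℂ) else 0) = 1 := by
      rw [tsum_eq_single 0]
      · simp
      · intro b hb; simp [hb]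
    rw [hg] at key
    exact key
  · intro k
    rcases Nat.eq_zero_or_pos k with hk | hk
    · subst hk
      simpa [ec_zero] using tendsto_const_nhds
    · have hQk : ‖Q ^ k‖ < 1 := by
        rw [norm_pow]
        exact pow_lt_one₀ (norm_nonneg Q) hQ hk.ne'
      have h0 : Filter.Tendsto (fun N : ℕ => (Q ^ k) ^ N) Filter.atTop (𝓝 0) :=
        tendsto_pow_atTop_nhds_zero_of_norm_lt_one hQk
      have : Filter.Tendsto (fun N : ℕ => ec Q k * z ^ k * (Q ^ k) ^ N) Filter.atTop
          (𝓝 (ec Q k * z ^ k * 0)) := h0.const_mul _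
      rw [mul_zero] at this
      simp only [if_neg hk.ne']
      convert this using 2 with N
      ring
  · filter_upwards with N
    intro k
    rw [norm_mul, norm_mul, norm_pow, norm_pow, norm_mul]
    apply mul_le_mul_of_nonneg_left _ (norm_nonneg _)
    apply pow_le_pow_left₀ (by positivity)
    rw [norm_pow]
    calc ‖Q‖ ^ N * ‖z‖ ≤ 1 * ‖z‖ := by
          apply mul_le_mul_of_nonneg_right (pow_le_one₀ (norm_nonneg Q) hQ.le) (norm_nonneg z)
      _ = ‖z‖ := one_mul _

theorem euler_eq {Q : ℂ} (hQ : ‖Q‖ < 1) (z : ℂ) :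
    eulerF Q z = ∏' n : ℕ, (1 - z * Q ^ n) := by
  have h1 : Filter.Tendsto
      (fun N : ℕ => (∏ i ∈ Finset.range N, (1 - z * Q ^ i)) * eulerF Q (Q ^ N * z))
      Filter.atTop (𝓝 ((∏' n : ℕ, (1 - z * Q ^ n)) * 1)) :=
    (Multipliable.tendsto_prod_tprod_nat (multipliable_one_sub z hQ)).mul (euler_tendsto_one hQ z)
  rw [mul_one] at h1
  have h2 : Filter.Tendsto
      (fun N : ℕ => (∏ i ∈ Finset.range N, (1 - z * Q ^ i)) * eulerF Q (Q ^ N * z))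
      Filter.atTop (𝓝 (eulerF Q z)) := by
    have : (fun N : ℕ => (∏ i ∈ Finset.range N, (1 - z * Q ^ i)) * eulerF Q (Q ^ N * z))
        = fun _ : ℕ => eulerF Q z := by
      funext N; exact (euler_iter hQ z N).symm
    rw [this]
    exact tendsto_const_nhds
  exact tendsto_nhds_unique h2 h1

/-! ### Master summability lemma via ratio test -/

lemma summable_norm_rec {P : ℂ} (hP : ‖P‖ < 1) {c u : ℕ → ℂ}
    (hu : Filter.Tendsto (fun k => ‖u k‖) Filter.atTop (𝓝 0))
    (hrec : ∀ k, c (k + 1) * (1 - P * P ^ k) = c k * u k) :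
    Summable fun k => ‖c k‖ := by
  have h1P : (0 : ℝ) < 1 - ‖P‖ := by linarith
  apply summable_of_ratio_norm_eventually_le (r := 1/2) (by norm_num)
  filter_upwards [hu.eventually_le_const (by linarith : (0:ℝ) < (1 - ‖P‖) / 2)] with k hk
  have hD : 1 - ‖P‖ ≤ ‖1 - P * P ^ k‖ := by
    have h2 : ‖P * P ^ k‖ ≤ ‖P‖ := by
      rw [norm_mul, norm_pow]
      calc ‖P‖ * ‖P‖ ^ k ≤ ‖P‖ * 1 := by
            apply mul_le_mul_of_nonneg_left (pow_le_one₀ (norm_nonneg P) hP.le) (norm_nonneg P)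
        _ = ‖P‖ := mul_one _
    calc 1 - ‖P‖ ≤ 1 - ‖P * P ^ k‖ := by linarith
      _ ≤ ‖1 - P * P ^ k‖ := by
          have := norm_sub_norm_le (1 : ℂ) (P * P ^ k)
          simpa using this
  have hDpos : (0 : ℝ) < ‖1 - P * P ^ k‖ := lt_of_lt_of_le h1P hD
  have heq : ‖c (k + 1)‖ * ‖1 - P * P ^ k‖ = ‖c k‖ * ‖u k‖ := by
    rw [← norm_mul, ← norm_mul, hrec k]
  have hb : ‖c k‖ * ‖u k‖ ≤ ‖c k‖ * ((1 - ‖P‖) / 2) :=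
    mul_le_mul_of_nonneg_left hk (norm_nonneg _)
  have : ‖c (k + 1)‖ * ‖1 - P * P ^ k‖ ≤ (1/2 * ‖c k‖) * ‖1 - P * P ^ k‖ := by
    rw [heq]
    calc ‖c k‖ * ‖u k‖ ≤ ‖c k‖ * ((1 - ‖P‖) / 2) := hb
      _ ≤ 1/2 * ‖c k‖ * ‖1 - P * P ^ k‖ := by nlinarith [norm_nonneg (c k)]
  have := le_of_mul_le_mul_right this hDpos
  simpa using this

/-! ### Integer arithmetic helpers -/

lemma int_two_mul_tri (n : ℤ) : 2 * (n * (n - 1) / 2) = n * (n - 1) := by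
  have he : Even (n * (n - 1)) := by
    have := Int.even_mul_succ_self (n - 1)
    simpa [mul_comm] using this
  obtain ⟨a, ha⟩ := he
  rw [ha]
  omega

lemma nat_two_mul_tri (k : ℕ) : 2 * (k * (k - 1) / 2) = k * (k - 1) := by
  have he : Even (k * (k - 1)) := by
    rcases k with _ | j
    · simp
    · have := Nat.even_mul_succ_self j
      simpa [mul_comm, Nat.succ_sub_one] using this
  obtain ⟨a, ha⟩ := he
  omega

lemma exp_key (m : ℤ) (k : ℕ) :
    (2*m - k) * ((2*m - k) - 1) / 2 - (2*m - k)
      = 2*m^2 - 3*m + (2 - 2*m) * k + ((k * (k - 1) / 2 : ℕ) : ℤ) := by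
  have hA := int_two_mul_tri (2*m - k)
  have hB : ((k * (k - 1) / 2 : ℕ) : ℤ) * 2 = (k : ℤ) * ((k : ℤ) - 1) := by
    have := nat_two_mul_tri k
    rcases k with _ | j
    · simp
    · push_cast [Nat.succ_sub_one] at this ⊢
      linarith
  have h2 : 2 * ((2*m - k) * ((2*m - k) - 1) / 2 - (2*m - k))
      = 2 * (2*m^2 - 3*m + (2 - 2*m) * k + ((k * (k - 1) / 2 : ℕ) : ℤ)) := by
    linear_combination hA - hB
  exact mul_left_cancel₀ two_ne_zero h2

lemma int_tri_succ_nat (n : ℕ) :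
    ((n:ℤ) + 1) * (((n:ℤ) + 1) - 1) / 2 = (n:ℤ) * ((n:ℤ) - 1) / 2 + n := by
  have hA := int_two_mul_tri ((n:ℤ) + 1)
  have hB := int_two_mul_tri (n:ℤ)
  have h2 : 2 * (((n:ℤ) + 1) * (((n:ℤ) + 1) - 1) / 2)
      = 2 * ((n:ℤ) * ((n:ℤ) - 1) / 2 + n) := by linear_combination hA - hB
  exact mul_left_cancel₀ two_ne_zero h2

lemma int_tri_neg_succ (n : ℕ) :
    (-(n:ℤ) - 1) * ((-(n:ℤ) - 1) - 1) / 2 = (-(n:ℤ)) * ((-(n:ℤ)) - 1) / 2 + (n + 1) := by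
  have hA := int_two_mul_tri (-(n:ℤ) - 1)
  have hB := int_two_mul_tri (-(n:ℤ))
  have h2 : 2 * ((-(n:ℤ) - 1) * ((-(n:ℤ) - 1) - 1) / 2)
      = 2 * ((-(n:ℤ)) * ((-(n:ℤ)) - 1) / 2 + (n + 1)) := by linear_combination hA - hB
  exact mul_left_cancel₀ two_ne_zero h2

/-! ### Theta summability -/

lemma theta_summable_norm {q : ℂ} (hq0 : q ≠ 0) (hq1 : ‖q‖ < 1) {y : ℂ} (hy : y ≠ 0) :
    Summable fun n : ℤ => ‖q ^ (n * (n - 1) / 2) * y ^ n‖ := by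
  apply Summable.of_nat_of_neg
  · apply summable_norm_rec (P := (0:ℂ)) (by simp)
      (u := fun n : ℕ => q ^ (n : ℤ) * y)
    · have : Filter.Tendsto (fun n : ℕ => ‖q‖ ^ n * ‖y‖) Filter.atTop (𝓝 (0 * ‖y‖)) :=
        (tendsto_pow_atTop_nhds_zero_of_norm_lt_one (by simpa using hq1)).mul_const _
      rw [zero_mul] at this
      convert this using 2 with n
      rw [norm_mul, norm_zpow, zpow_natCast]
    · intro n
      push_cast
      rw [int_tri_succ_nat n, zpow_add₀ hq0, zpow_add₀ hy]
      simp only [zpow_one]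
      ring
  · apply summable_norm_rec (P := (0:ℂ)) (by simp)
      (u := fun n : ℕ => q ^ ((n : ℤ) + 1) * y⁻¹)
    · have : Filter.Tendsto (fun n : ℕ => (‖q‖ ^ n * (‖q‖ * ‖y⁻¹‖))) Filter.atTop
          (𝓝 (0 * (‖q‖ * ‖y⁻¹‖))) :=
        (tendsto_pow_atTop_nhds_zero_of_norm_lt_one (by simpa using hq1)).mul_const _
      rw [zero_mul] at this
      convert this using 2 with n
      rw [norm_mul, norm_zpow,
        show ((n:ℤ) + 1) = ((n+1 : ℕ) : ℤ) by push_cast; ring, zpow_natCast, pow_succ]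
      ring
    · intro n
      push_cast
      rw [show (-((n:ℤ) + 1)) * ((-((n:ℤ) + 1)) - 1) / 2
            = (-(n:ℤ)) * ((-(n:ℤ)) - 1) / 2 + ((n:ℤ) + 1) by
          have := int_tri_neg_succ n
          rw [show (-((n:ℤ) + 1)) = (-(n:ℤ) - 1) by ring]
          linarith [this]]
      rw [zpow_add₀ hq0]
      rw [show (-((n:ℤ) + 1)) = -(n:ℤ) + (-1) by ring, zpow_add₀ hy]
      simp only [zpow_neg, zpow_one]
      ring

/-! ### Airy series -/

noncomputable def bb (q : ℂ) (k : ℕ) : ℂ := (-1)^k * q^(k*(k-1)/2) / qPoch (q^2) (q^2) k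

lemma denom_eq (q : ℂ) (k : ℕ) : qPoch (-q) q k * qPoch q q k = qPoch (q^2) (q^2) k := by
  rw [qPoch, qPoch, qPoch, ← Finset.prod_mul_distrib]
  apply Finset.prod_congr rfl
  intro i _
  have h : (q^2) * (q^2)^i = (q * q^i)^2 := by ring
  rw [h]
  ring

lemma bb_rec {q : ℂ} (hq1 : ‖q‖ < 1) (k : ℕ) :
    bb q (k + 1) * (1 - q^2 * (q^2)^k) = bb q k * (-(q^k)) := by
  have hQ : ‖q^2‖ < 1 := by
    rw [norm_pow]
    calc ‖q‖^2 ≤ ‖q‖ * 1 := by nlinarith [norm_nonneg q]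
      _ < 1 := by simpa using hq1
  have hP : qPoch (q^2) (q^2) k ≠ 0 := qPoch_ne_zero (norm_q_mul_pow_lt_one hQ) k
  have h1 : (1 : ℂ) - q^2 * (q^2) ^ k ≠ 0 := one_sub_ne' (norm_q_mul_pow_lt_one hQ k)
  rw [bb, bb, qPoch_succ, tri_succ, pow_add, pow_succ]
  field_simp
  ring

lemma airy_summable_norm {q : ℂ} (hq1 : ‖q‖ < 1) (y : ℂ) :
    Summable fun k : ℕ => ‖bb q k * y ^ k‖ := by
  have hQ : ‖q^2‖ < 1 := by
    rw [norm_pow]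
    calc ‖q‖^2 ≤ ‖q‖ * 1 := by nlinarith [norm_nonneg q]
      _ < 1 := by simpa using hq1
  apply summable_norm_rec (P := q^2) hQ (u := fun k : ℕ => -(q^k) * y)
  · have : Filter.Tendsto (fun k : ℕ => ‖q‖ ^ k * ‖y‖) Filter.atTop (𝓝 (0 * ‖y‖)) :=
      (tendsto_pow_atTop_nhds_zero_of_norm_lt_one (by simpa using hq1)).mul_const _
    rw [zero_mul] at this
    convert this using 2 with k
    rw [norm_mul, norm_neg, norm_pow]
  · intro k
    have := bb_rec hq1 k
    rw [pow_succ]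
    linear_combination (y^k * y) * this

/-! ### The key term identity -/

lemma term_eq {q x : ℂ} (hq0 : q ≠ 0) (hx : x ≠ 0) (m : ℤ) (k : ℕ) :
    q ^ ((2*m - k) * ((2*m - k) - 1) / 2) * (x/q) ^ (2*m - (k:ℤ)) * (bb q k * x ^ k)
      + q ^ ((2*m - k) * ((2*m - k) - 1) / 2) * (-(x/q)) ^ (2*m - (k:ℤ)) * (bb q k * (-x) ^ k)
      = (2 * q ^ (2*m^2 - 3*m) * x ^ (2*m)) * (ec (q^2) k * (q ^ (2 - 2*m)) ^ k) := by
  set n : ℤ := 2*m - (k:ℤ) with hn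
  set A : ℤ := n * (n - 1) / 2 with hA
  have hone : ((-1 : ℂ)) ≠ 0 := by norm_num
  have hsign : (-(x/q)) ^ n * (-x)^k = (x/q) ^ n * x ^ k := by
    rw [show -(x/q) = (-1) * (x/q) by ring, mul_zpow,
        show -x = (-1) * x by ring, mul_pow]
    have h1 : ((-1 : ℂ)) ^ n * ((-1:ℂ))^k = 1 := by
      rw [← zpow_natCast (-1 : ℂ) k, ← zpow_add₀ hone,
        show n + (k:ℤ) = 2*m by rw [hn]; ring, zpow_mul]
      norm_num
    calc (-1:ℂ) ^ n * (x/q) ^ n * ((-1:ℂ) ^ k * x ^ k)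
        = ((-1:ℂ) ^ n * (-1:ℂ) ^ k) * ((x/q) ^ n * x ^ k) := by ring
      _ = (x/q) ^ n * x ^ k := by rw [h1, one_mul]
  have hxq : (x/q) ^ n * x ^ k = x ^ (2*m) * q ^ (-n) := by
    rw [div_zpow, ← zpow_natCast x k, div_eq_mul_inv, ← zpow_neg]
    rw [mul_right_comm, ← zpow_add₀ hx, show n + (k:ℤ) = 2*m by rw [hn]; ring]
  have hq_comb : q ^ A * q ^ (-n) * q ^ ((k*(k-1)/2 : ℕ) : ℤ)
      = q ^ (2*m^2 - 3*m) * q ^ ((2 - 2*m) * (k:ℤ)) * q ^ ((2 * (k*(k-1)/2) : ℕ) : ℤ) := by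
    rw [← zpow_add₀ hq0, ← zpow_add₀ hq0, ← zpow_add₀ hq0, ← zpow_add₀ hq0]
    congr 1
    have hk := exp_key m k
    rw [← hn, ← hA] at hk
    push_cast
    push_cast at hk
    linarith
  have hQT : ((q^2) ^ (k*(k-1)/2 : ℕ) : ℂ) = q ^ ((2 * (k*(k-1)/2) : ℕ) : ℤ) := by
    rw [← pow_mul, zpow_natCast]
  have hzk : (q ^ ((2:ℤ) - 2*m)) ^ k = q ^ ((2 - 2*m) * (k:ℤ)) := by
    rw [← zpow_natCast (q ^ ((2:ℤ) - 2*m)) k, ← zpow_mul]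
  have ht2 : q ^ A * (-(x/q)) ^ n * (bb q k * (-x) ^ k)
      = q ^ A * (x/q) ^ n * (bb q k * x ^ k) := by
    linear_combination (q ^ A * bb q k) * hsign
  rw [ht2]
  have hT : (q : ℂ) ^ (k*(k-1)/2 : ℕ) = q ^ ((k*(k-1)/2 : ℕ) : ℤ) := (zpow_natCast q _).symm
  calc q ^ A * (x/q) ^ n * (bb q k * x ^ k) + q ^ A * (x/q) ^ n * (bb q k * x ^ k)
      = 2 * (q ^ A * ((x/q) ^ n * x ^ k) * bb q k) := by ring
    _ = 2 * (q ^ A * (x ^ (2*m) * q ^ (-n)) * bb q k) := by rw [hxq]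
    _ = 2 * x ^ (2*m) * (q ^ A * q ^ (-n) * q ^ ((k*(k-1)/2 : ℕ) : ℤ))
          * ((-1:ℂ)^k / qPoch (q^2) (q^2) k) := by rw [bb, ← hT]; ring
    _ = 2 * x ^ (2*m) * (q ^ (2*m^2 - 3*m) * q ^ ((2 - 2*m) * (k:ℤ))
          * q ^ ((2 * (k*(k-1)/2) : ℕ) : ℤ))
          * ((-1:ℂ)^k / qPoch (q^2) (q^2) k) := by rw [hq_comb]
    _ = (2 * q ^ (2*m^2 - 3*m) * x ^ (2*m)) * (ec (q^2) k * (q ^ (2 - 2*m)) ^ k) := by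
        rw [ec, ← hQT, hzk]
        ring

/-! ### Assembly -/

noncomputable def th (q y : ℂ) (n : ℤ) : ℂ := q ^ (n * (n - 1) / 2) * y ^ n

noncomputable def ai (q y : ℂ) (k : ℕ) : ℂ := bb q k * y ^ k

noncomputable def Tfun (q x : ℂ) : ℤ × ℕ → ℂ := fun p =>
  th q (x / q) p.1 * ai q x p.2 + th q (-(x / q)) p.1 * ai q (-x) p.2

noncomputable def Cm (q x : ℂ) (m : ℤ) : ℂ := 2 * q ^ (2 * m ^ 2 - 3 * m) * x ^ (2 * m)

noncomputable def Pm (q : ℂ) (m : ℤ) : ℂ := ∏' n : ℕ, (1 - q ^ (2 - 2 * m) * (q ^ 2) ^ n)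

lemma hQ1_of {q : ℂ} (hq1 : ‖q‖ < 1) : ‖q ^ 2‖ < 1 := by
  rw [norm_pow]
  calc ‖q‖ ^ 2 ≤ ‖q‖ * 1 := by nlinarith [norm_nonneg q]
    _ < 1 := by simpa using hq1

lemma th_summable {q : ℂ} (hq0 : q ≠ 0) (hq1 : ‖q‖ < 1) {y : ℂ} (hy : y ≠ 0) :
    Summable fun n : ℤ => ‖th q y n‖ := theta_summable_norm hq0 hq1 hy

lemma ai_summable {q : ℂ} (hq1 : ‖q‖ < 1) (y : ℂ) :
    Summable fun k : ℕ => ‖ai q y k‖ := airy_summable_norm hq1 y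

lemma Todd {q x : ℂ} (p : ℤ × ℕ) (hodd : Odd (p.1 + (p.2 : ℤ))) : Tfun q x p = 0 := by
  obtain ⟨n, k⟩ := p
  obtain ⟨t, ht⟩ := hodd
  have hone : ((-1 : ℂ)) ≠ 0 := by norm_num
  have h1 : ((-1 : ℂ)) ^ n * ((-1 : ℂ)) ^ k = -1 := by
    rw [← zpow_natCast (-1 : ℂ) k, ← zpow_add₀ hone, ht, zpow_add₀ hone, zpow_mul]
    norm_num
  have h2 : (-(x / q)) ^ n * (-x) ^ k = -((x / q) ^ n * x ^ k) := by
    rw [show -(x/q) = (-1) * (x/q) by ring, mul_zpow,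
        show -x = (-1) * x by ring, mul_pow]
    calc (-1:ℂ) ^ n * (x/q) ^ n * ((-1:ℂ) ^ k * x ^ k)
        = ((-1:ℂ) ^ n * (-1:ℂ) ^ k) * ((x/q) ^ n * x ^ k) := by ring
      _ = -((x / q) ^ n * x ^ k) := by rw [h1]; ring
  simp only [Tfun, th, ai]
  linear_combination (q ^ (n * (n - 1) / 2) * bb q k) * h2

lemma Tsigma {q x : ℂ} (hq0 : q ≠ 0) (hx : x ≠ 0) (m : ℤ) (k : ℕ) :
    Tfun q x (2 * m - (k : ℤ), k) = Cm q x m * (ec (q ^ 2) k * (q ^ (2 - 2 * m)) ^ k) := by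
  simp only [Tfun, th, ai, Cm]
  exact term_eq hq0 hx m k

lemma Tsummable {q x : ℂ} (hq0 : q ≠ 0) (hq1 : ‖q‖ < 1) (hx : x ≠ 0) :
    Summable (Tfun q x) :=
  (summable_mul_of_summable_norm (th_summable hq0 hq1 (div_ne_zero hx hq0))
      (ai_summable hq1 x)).add
    (summable_mul_of_summable_norm
      (th_summable hq0 hq1 (neg_ne_zero.2 (div_ne_zero hx hq0))) (ai_summable hq1 (-x)))

lemma stepRHS {q x : ℂ} (hq0 : q ≠ 0) (hq1 : ‖q‖ < 1) (hx : x ≠ 0) :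
    jTheta q (x / q) * qAiry q (-x) + jTheta q (-(x / q)) * qAiry q x
      = ∑' p : ℤ × ℕ, Tfun q x p := by
  have hS1 := th_summable hq0 hq1 (div_ne_zero hx hq0)
  have hS2 := th_summable hq0 hq1 (q := q) (neg_ne_zero.2 (div_ne_zero hx hq0))
  have hA1 := ai_summable hq1 (q := q) x
  have hA2 := ai_summable hq1 (q := q) (-x)
  have hAi1 : qAiry q (-x) = ∑' k : ℕ, ai q x k := by
    unfold qAiry ai bb
    apply tsum_congr
    intro k
    rw [denom_eq, neg_neg]
  have hAi2 : qAiry q x = ∑' k : ℕ, ai q (-x) k := by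
    unfold qAiry ai bb
    apply tsum_congr
    intro k
    rw [denom_eq]
  have hth1 : jTheta q (x / q) = ∑' n : ℤ, th q (x / q) n := rfl
  have hth2 : jTheta q (-(x / q)) = ∑' n : ℤ, th q (-(x / q)) n := rfl
  rw [hAi1, hAi2, hth1, hth2,
    tsum_mul_tsum_of_summable_norm hS1 hA1, tsum_mul_tsum_of_summable_norm hS2 hA2,
    ← Summable.tsum_add (summable_mul_of_summable_norm hS1 hA1)
      (summable_mul_of_summable_norm hS2 hA2)]
  rfl

lemma reindexT {q x : ℂ} : ∑' p : ℤ × ℕ, Tfun q x p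
      = ∑' p : ℤ × ℕ, Tfun q x (2 * p.1 - p.2, p.2) := by
  apply tsum_eq_tsum_of_ne_zero_bij
    (i := fun w => (2 * (w : ℤ × ℕ).1 - (w : ℤ × ℕ).2, (w : ℤ × ℕ).2))
  · intro a b hab
    have h1 := congrArg Prod.fst hab
    have h2 := congrArg Prod.snd hab
    simp only at h1 h2
    apply Subtype.ext
    apply Prod.ext
    · have h2' : (a : ℤ × ℕ).2 = (b : ℤ × ℕ).2 := h2
      omega
    · exact h2
  · intro p hp
    rcases Int.even_or_odd (p.1 + (p.2 : ℤ)) with he | ho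
    · obtain ⟨t, ht⟩ := he
      refine ⟨⟨(t, p.2), ?_⟩, ?_⟩
      · have hpt : ((2 * t - (p.2 : ℤ), p.2) : ℤ × ℕ) = p := by
          apply Prod.ext
          · simp only; omega
          · rfl
        simpa [Function.mem_support, hpt] using hp
      · simp only
        apply Prod.ext
        · simp only; omega
        · rfl
    · exact absurd (Todd p ho) hp
  · intro w
    rfl

lemma step5 {q x : ℂ} (hq0 : q ≠ 0) (hq1 : ‖q‖ < 1) (hx : x ≠ 0) :
    ∑' p : ℤ × ℕ, Tfun q x (2 * p.1 - p.2, p.2) = ∑' m : ℤ, Cm q x m * Pm q m := by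
  have hUsum : Summable (fun p : ℤ × ℕ => Tfun q x (2 * p.1 - p.2, p.2)) := by
    have hinj : Function.Injective (fun p : ℤ × ℕ => ((2 * p.1 - p.2, p.2) : ℤ × ℕ)) := by
      intro a b hab
      have h1 := congrArg Prod.fst hab
      have h2 := congrArg Prod.snd hab
      simp only at h1 h2
      apply Prod.ext
      · omega
      · exact h2
    exact (Tsummable hq0 hq1 hx).comp_injective hinj
  rw [Summable.tsum_prod' hUsum hUsum.prod_factor]
  apply tsum_congr
  intro m
  calc (∑' k : ℕ, Tfun q x (2 * m - (k:ℤ), k))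
      = ∑' k : ℕ, Cm q x m * (ec (q ^ 2) k * (q ^ (2 - 2 * m)) ^ k) :=
        tsum_congr fun k => Tsigma hq0 hx m k
    _ = Cm q x m * ∑' k : ℕ, ec (q ^ 2) k * (q ^ (2 - 2 * m)) ^ k := tsum_mul_left
    _ = Cm q x m * Pm q m := by
        rw [show (∑' k : ℕ, ec (q ^ 2) k * (q ^ (2 - 2 * m)) ^ k)
            = eulerF (q ^ 2) (q ^ (2 - 2 * m)) from rfl,
          euler_eq (hQ1_of hq1) (q ^ (2 - 2 * m))]
        rfl

lemma Pm_zero {q : ℂ} (hq0 : q ≠ 0) (hq1 : ‖q‖ < 1) {m : ℤ} (hm : 1 ≤ m) : Pm q m = 0 := by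
  apply tprod_one_sub_eq_zero (hQ1_of hq1) (n0 := (m - 1).toNat)
  rw [← pow_mul, ← zpow_natCast q (2 * (m-1).toNat), ← zpow_add₀ hq0,
    show ((2:ℤ) - 2*m + ((2 * (m-1).toNat : ℕ) : ℤ)) = 0 by
      push_cast [Int.toNat_of_nonneg (by omega : (0:ℤ) ≤ m - 1)]; ring]
  exact zpow_zero q

lemma Pm_split {q : ℂ} (hq0 : q ≠ 0) (hq1 : ‖q‖ < 1) (j : ℕ) :
    qPoch (q^2) (q^2) j * Pm q (-(j:ℤ)) = ∏' n : ℕ, (1 - q^2 * (q^2)^n) := by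
  have h := tprod_split (c := q^2) (t := q^2) (hQ1_of hq1) j
  rw [← h]
  congr 1
  unfold Pm
  apply tprod_congr
  intro n
  congr 2
  rw [show ((2:ℤ) - 2*(-(j:ℤ))) = ((2*(j+1) : ℕ) : ℤ) by push_cast; ring,
    zpow_natCast, pow_mul, pow_succ']

lemma step6 {q x : ℂ} (hq0 : q ≠ 0) (hq1 : ‖q‖ < 1) :
    ∑' m : ℤ, Cm q x m * Pm q m = ∑' j : ℕ, Cm q x (-(j:ℤ)) * Pm q (-(j:ℤ)) := by
  apply tsum_eq_tsum_of_ne_zero_bij (i := fun w => -(((w : ℕ)) : ℤ))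
  · intro a b hab
    simp only [neg_inj, Int.natCast_inj] at hab
    exact Subtype.ext hab
  · intro m hm
    by_cases hm1 : 1 ≤ m
    · exact absurd (show Cm q x m * Pm q m = 0 by rw [Pm_zero hq0 hq1 hm1, mul_zero]) hm
    · push_neg at hm1
      have hmm : -(((((-m).toNat) : ℕ)) : ℤ) = m := by
        rw [Int.toNat_of_nonneg (by omega)]; ring
      refine ⟨⟨(-m).toNat, ?_⟩, hmm⟩
      show ¬ (Cm q x (-((((-m).toNat : ℕ)) : ℤ)) * Pm q (-((((-m).toNat : ℕ)) : ℤ)) = 0)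
      rw [hmm]
      exact hm
  · intro w
    rfl

lemma step7 {q x : ℂ} (hq0 : q ≠ 0) (hq1 : ‖q‖ < 1) (hx : x ≠ 0) :
    ∑' j : ℕ, Cm q x (-(j:ℤ)) * Pm q (-(j:ℤ))
      = 2 * (∏' n : ℕ, (1 - q^2 * (q^2)^n)) * ramanujanA (q^2) (-(q^3/x^2)) := by
  have hram : ramanujanA (q^2) (-(q^3/x^2))
      = ∑' j : ℕ, (q^2)^(j^2) / qPoch (q^2) (q^2) j * (q^3/x^2)^j := by
    unfold ramanujanA
    apply tsum_congr
    intro j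
    rw [neg_neg]
  rw [hram, ← tsum_mul_left]
  apply tsum_congr
  intro j
  have hE : qPoch (q^2) (q^2) j ≠ 0 := qPoch_ne_zero (norm_q_mul_pow_lt_one (hQ1_of hq1)) j
  have hPm : Pm q (-(j:ℤ)) = (∏' n : ℕ, (1 - q^2*(q^2)^n)) / qPoch (q^2) (q^2) j := by
    rw [eq_div_iff hE, mul_comm]
    exact Pm_split hq0 hq1 j
  rw [hPm]
  unfold Cm
  rw [show (2 * (-(j:ℤ))^2 - 3 * (-(j:ℤ))) = ((2*j^2 + 3*j : ℕ) : ℤ) by push_cast; ring,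
     zpow_natCast,
     show (2 * (-(j:ℤ))) = -(((2*j : ℕ)) : ℤ) by push_cast; ring,
     zpow_neg, zpow_natCast, div_pow, ← pow_mul, ← pow_mul, ← pow_mul]
  rw [pow_add]
  field_simp

lemma hPochProd {q : ℂ} (hq1 : ‖q‖ < 1) :
    qPochInf q q * qPochInf (-1) q = 2 * ∏' n : ℕ, (1 - q^2 * (q^2)^n) := by
  have hB : qPochInf (-1) q = 2 * ∏' n : ℕ, (1 - (-q) * q^n) := by
    have h := tprod_split (c := (-1:ℂ)) (t := q) hq1 1
    unfold qPochInf
    rw [← h]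
    congr 1
    · norm_num
    · apply tprod_congr
      intro n
      norm_num
  have hmul := Multipliable.tprod_mul (multipliable_one_sub q hq1) (multipliable_one_sub (-q) hq1)
  have hfac : ∀ n : ℕ, (1 - q * q^n) * (1 - (-q) * q^n) = 1 - q^2 * (q^2)^n := by
    intro n
    have h : (q^2) * (q^2)^n = (q * q^n)^2 := by ring
    rw [h]
    ring
  calc qPochInf q q * qPochInf (-1) q
      = (∏' n : ℕ, (1 - q * q^n)) * (2 * ∏' n : ℕ, (1 - (-q) * q^n)) := by
        rw [hB]; rfl
    _ = 2 * ((∏' n : ℕ, (1 - q * q^n)) * ∏' n : ℕ, (1 - (-q) * q^n)) := by ring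
    _ = 2 * ∏' n : ℕ, ((1 - q * q^n) * (1 - (-q) * q^n)) := by rw [hmul]
    _ = 2 * ∏' n : ℕ, (1 - q^2 * (q^2)^n) := by
        congr 1
        exact tprod_congr hfac

lemma PiQ_ne {q : ℂ} (hq1 : ‖q‖ < 1) : (∏' n : ℕ, (1 - q^2 * (q^2)^n)) ≠ 0 := by
  apply tprod_one_sub_ne_zero (hQ1_of hq1)
  intro n h
  have h2 := norm_q_mul_pow_lt_one (hQ1_of hq1) n
  rw [h] at h2
  simp at h2

/-- Connection formula between the Ramanujan function and the q-Airy function. -/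
theorem ramanujan_qAiry_connection (q : ℂ) (hq0 : 0 < ‖q‖) (hq1 : ‖q‖ < 1)
    (x : ℂ) (hx : x ≠ 0) :
    ramanujanA (q ^ 2) (-(q ^ 3 / x ^ 2))
      = (qPochInf q q * qPochInf (-1) q)⁻¹ *
          (jTheta q (x / q) * qAiry q (-x) + jTheta q (-(x / q)) * qAiry q x) := by
  have hq : q ≠ 0 := norm_pos_iff.mp hq0
  rw [stepRHS hq hq1 hx, reindexT, step5 hq hq1 hx, step6 hq hq1, step7 hq hq1 hx,
    hPochProd hq1]
  have hne : (2 : ℂ) * ∏' n : ℕ, (1 - q^2 * (q^2)^n) ≠ 0 :=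
    mul_ne_zero two_ne_zero (PiQ_ne hq1)
  rw [inv_mul_cancel_left₀ hne]
end

section
/- For 0 < |q| < 1 and all x ∈ ℂ, the q-exponential function E_q(x) = Σ_{n≥0} q^{n(n−1)/2} x^n/(q;q)_n equals the infinite product (−x; q)_∞. -/
/-- Finite q-Pochhammer symbol `(q;q)_n`. -/
noncomputable def qPochQ (q : ℂ) (n : ℕ) : ℂ := ∏ k ∈ Finset.range n, (1 - q ^ (k + 1))

/-- The q-exponential `E_q(x) = Σ_{n≥0} q^{n(n−1)/2} x^n/(q;q)_n`. -/
noncomputable def qExp_E (q x : ℂ) : ℂ := ∑' n : ℕ, q ^ (n * (n - 1) / 2) * x ^ n / qPochQ q n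

/-- Coefficients of the finite product. -/
noncomputable def qCC (q x : ℂ) (N j : ℕ) : ℂ :=
  if j ≤ N then
    q ^ (j * (j - 1) / 2) * (∏ k ∈ Finset.Ico (N - j) N, (1 - q ^ (k + 1))) * x ^ j / qPochQ q j
  else 0

lemma qTri (j : ℕ) : (j + 1) * j / 2 = j * (j - 1) / 2 + j := by
  have h1 : (j + 1).choose 2 = (j + 1) * ((j + 1) - 1) / 2 := Nat.choose_two_right _
  have h2 : j.choose 2 = j * (j - 1) / 2 := Nat.choose_two_right _
  have h3 : (j + 1).choose 2 = j.choose 1 + j.choose 2 := Nat.choose_succ_succ _ _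
  have h4 : j.choose 1 = j := Nat.choose_one_right _
  simp only [Nat.add_sub_cancel] at h1
  omega

lemma qPochQ_ne_zero {q : ℂ} (hden : ∀ k : ℕ, (1 : ℂ) - q ^ (k + 1) ≠ 0) (n : ℕ) :
    qPochQ q n ≠ 0 :=
  Finset.prod_ne_zero_iff.mpr fun k _ => hden k

lemma qCC_zero (q x : ℂ) (N : ℕ) : qCC q x N 0 = 1 := by
  simp [qCC, qPochQ]

lemma qCC_gt {q x : ℂ} {N j : ℕ} (h : N < j) : qCC q x N j = 0 := by
  simp [qCC, Nat.not_le.mpr h]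

lemma qCC_succ_succ {q : ℂ} (hden : ∀ k : ℕ, (1 : ℂ) - q ^ (k + 1) ≠ 0) (x : ℂ)
    (N j : ℕ) (hj : j ≤ N) :
    qCC q x (N + 1) (j + 1) = qCC q x N (j + 1) + x * q ^ N * qCC q x N j := by
  have hP : qPochQ q j ≠ 0 := qPochQ_ne_zero hden j
  have hd : (1 : ℂ) - q ^ (j + 1) ≠ 0 := hden j
  have hPs : qPochQ q (j + 1) = qPochQ q j * (1 - q ^ (j + 1)) := Finset.prod_range_succ _ _
  have he : (j + 1) * ((j + 1) - 1) / 2 = j * (j - 1) / 2 + j := by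
    simpa using qTri j
  rcases lt_or_eq_of_le hj with hlt | rfl
  · obtain ⟨m, rfl⟩ : ∃ m, N = j + 1 + m := le_iff_exists_add.mp hlt
    have h1 : j + 1 ≤ j + 1 + m := by omega
    have h2 : j + 1 ≤ j + 1 + m + 1 := by omega
    simp only [qCC, if_pos h1, if_pos h2, if_pos (show j ≤ j + 1 + m by omega)]
    have e1 : j + 1 + m + 1 - (j + 1) = m + 1 := by omega
    have e2 : j + 1 + m - (j + 1) = m := by omega
    have e3 : j + 1 + m - j = m + 1 := by omega
    rw [e1, e2, e3, he, hPs]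
    have r1 : ∏ k ∈ Finset.Ico (m + 1) (j + 1 + m + 1), (1 - q ^ (k + 1)) =
        (∏ k ∈ Finset.Ico (m + 1) (j + 1 + m), (1 - q ^ (k + 1))) * (1 - q ^ (j + 1 + m + 1)) :=
      Finset.prod_Ico_succ_top (by omega) _
    have r2 : ∏ k ∈ Finset.Ico m (j + 1 + m), (1 - q ^ (k + 1)) =
        (1 - q ^ (m + 1)) * ∏ k ∈ Finset.Ico (m + 1) (j + 1 + m), (1 - q ^ (k + 1)) :=
      Finset.prod_eq_prod_Ico_succ_bot (by omega) _
    rw [r1, r2]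
    field_simp
    ring
  · have h1 : ¬ (j + 1 ≤ j) := by omega
    rw [qCC, qCC, qCC, if_pos (le_refl (j + 1)), if_neg h1, if_pos (le_refl j)]
    have hr1 : ∏ k ∈ Finset.Ico (j - j) j, ((1 : ℂ) - q ^ (k + 1)) = qPochQ q j := by
      rw [Nat.sub_self, ← Finset.range_eq_Ico]; rfl
    have hr2 : ∏ k ∈ Finset.Ico (j + 1 - (j + 1)) (j + 1), ((1 : ℂ) - q ^ (k + 1)) =
        qPochQ q j * (1 - q ^ (j + 1)) := by
      rw [Nat.sub_self, ← Finset.range_eq_Ico, Finset.prod_range_succ]; rfl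
    rw [hr1, hr2, he, hPs, zero_add]
    field_simp
    ring

lemma qProd_eq_sum {q : ℂ} (hden : ∀ k : ℕ, (1 : ℂ) - q ^ (k + 1) ≠ 0) (x : ℂ) (N : ℕ) :
    ∏ k ∈ Finset.range N, (1 + x * q ^ k) = ∑ j ∈ Finset.range (N + 1), qCC q x N j := by
  induction N with
  | zero => simp [qCC_zero]
  | succ N ih =>
    rw [Finset.prod_range_succ, ih]
    have e1 := Finset.sum_range_succ' (qCC q x N) (N + 1)
    have e2 := Finset.sum_range_succ (qCC q x N) (N + 1)
    have e3 := Finset.sum_range_succ' (qCC q x (N + 1)) (N + 1)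
    rw [qCC_zero] at e1 e3
    rw [qCC_gt (by omega)] at e2
    have e4 : ∑ j ∈ Finset.range (N + 1), qCC q x (N + 1) (j + 1) =
        ∑ j ∈ Finset.range (N + 1), (qCC q x N (j + 1) + x * q ^ N * qCC q x N j) := by
      refine Finset.sum_congr rfl fun j hj => ?_
      exact qCC_succ_succ hden x N j (Nat.lt_succ_iff.mp (Finset.mem_range.mp hj))
    have e5 : ∑ j ∈ Finset.range (N + 1), qCC q x N (j + 1) =
        ∑ j ∈ Finset.range (N + 1), qCC q x N j - 1 := by
      rw [e2, add_zero] at e1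
      linear_combination -e1
    rw [e3, e4, Finset.sum_add_distrib, ← Finset.mul_sum, e5]
    ring

theorem qExp_E_eq_prod (q : ℂ) (hq0 : 0 < ‖q‖) (hq1 : ‖q‖ < 1) (x : ℂ) :
    qExp_E q x = ∏' n : ℕ, (1 + x * q ^ n) := by
  have hden : ∀ k : ℕ, (1 : ℂ) - q ^ (k + 1) ≠ 0 := by
    intro k h
    have h1 : (1 : ℂ) = q ^ (k + 1) := by linear_combination h
    have : ‖q ^ (k + 1)‖ < 1 := by
      rw [norm_pow]
      exact pow_lt_one₀ (norm_nonneg q) hq1 (by omega)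
    rw [← h1] at this
    simp at this
  -- the dominating function
  set bound : ℕ → ℝ := fun j => ‖q‖ ^ (j * (j - 1) / 2) * 2 ^ j * ‖x‖ ^ j / ‖qPochQ q j‖
    with hbound_def
  have hbound_nonneg : ∀ j, 0 ≤ bound j := fun j => by positivity
  have hbound_succ : ∀ j, bound (j + 1) =
      bound j * (2 * ‖x‖ * ‖q‖ ^ j / ‖1 - q ^ (j + 1)‖) := by
    intro j
    have hP : qPochQ q (j + 1) = qPochQ q j * (1 - q ^ (j + 1)) := Finset.prod_range_succ _ _
    have he : (j + 1) * ((j + 1) - 1) / 2 = j * (j - 1) / 2 + j := by simpa using qTri j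
    have hPn : ‖qPochQ q j‖ ≠ 0 := norm_ne_zero_iff.mpr (qPochQ_ne_zero hden j)
    have hdn : ‖(1 : ℂ) - q ^ (j + 1)‖ ≠ 0 := norm_ne_zero_iff.mpr (hden j)
    rw [hbound_def]
    simp only [he, hP, norm_mul, pow_succ, pow_add]
    field_simp
  have hbound_sum : Summable bound := by
    refine summable_of_ratio_norm_eventually_le (r := 1/2) (by norm_num) ?_
    have hlim : Filter.Tendsto (fun j : ℕ => 2 * ‖x‖ * ‖q‖ ^ j / ‖1 - q ^ (j + 1)‖)
        Filter.atTop (nhds 0) := by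
      have hnum : Filter.Tendsto (fun j : ℕ => 2 * ‖x‖ * ‖q‖ ^ j) Filter.atTop (nhds 0) := by
        simpa using (tendsto_pow_atTop_nhds_zero_of_lt_one (norm_nonneg q) hq1).const_mul
          (2 * ‖x‖)
      have hdenom : Filter.Tendsto (fun j : ℕ => ‖1 - q ^ (j + 1)‖) Filter.atTop
          (nhds 1) := by
        have h1 : Filter.Tendsto (fun j : ℕ => q ^ (j + 1)) Filter.atTop (nhds 0) :=
          (tendsto_pow_atTop_nhds_zero_of_norm_lt_one hq1).comp
            (Filter.tendsto_add_atTop_nat 1)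
        have h2 : Filter.Tendsto (fun j : ℕ => (1 : ℂ) - q ^ (j + 1)) Filter.atTop
            (nhds 1) := by
          simpa using (tendsto_const_nhds (x := (1 : ℂ))).sub h1
        simpa using h2.norm
      have h3 := hnum.div hdenom one_ne_zero
      rw [zero_div] at h3
      exact h3
    have hev : ∀ᶠ j : ℕ in Filter.atTop,
        2 * ‖x‖ * ‖q‖ ^ j / ‖1 - q ^ (j + 1)‖ ≤ 1/2 :=
      hlim.eventually_le_const (by norm_num)
    filter_upwards [hev] with j hj
    rw [Real.norm_of_nonneg (hbound_nonneg _), Real.norm_of_nonneg (hbound_nonneg _),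
      hbound_succ j]
    calc bound j * (2 * ‖x‖ * ‖q‖ ^ j / ‖1 - q ^ (j + 1)‖) ≤ bound j * (1/2) :=
          mul_le_mul_of_nonneg_left hj (hbound_nonneg j)
      _ = 1/2 * bound j := by ring
  -- norm bound on coefficients
  have hcc_bound : ∀ N j, ‖qCC q x N j‖ ≤ bound j := by
    intro N j
    by_cases hj : j ≤ N
    · rw [qCC, if_pos hj, norm_div, norm_mul, norm_mul, norm_pow, norm_pow]
      simp only [hbound_def]
      have hprod : ‖∏ k ∈ Finset.Ico (N - j) N, ((1 : ℂ) - q ^ (k + 1))‖ ≤ 2 ^ j := by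
        rw [norm_prod]
        calc ∏ k ∈ Finset.Ico (N - j) N, ‖(1 : ℂ) - q ^ (k + 1)‖
            ≤ ∏ k ∈ Finset.Ico (N - j) N, (2 : ℝ) := by
              refine Finset.prod_le_prod (fun k _ => norm_nonneg _) fun k _ => ?_
              calc ‖(1 : ℂ) - q ^ (k + 1)‖ ≤ ‖(1 : ℂ)‖ + ‖q ^ (k + 1)‖ := norm_sub_le _ _
                _ ≤ 1 + 1 := by
                    rw [norm_one, norm_pow]
                    exact add_le_add_right (pow_le_one₀ (norm_nonneg q) hq1.le) 1
                _ = 2 := by norm_num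
          _ = 2 ^ (Finset.Ico (N - j) N).card := Finset.prod_const _
          _ = 2 ^ j := by rw [Nat.card_Ico]; congr 1; omega
      gcongr
    · rw [qCC_gt (Nat.not_le.mp hj)]
      simpa using hbound_nonneg j
  -- pointwise limit
  have hlim : ∀ j : ℕ, Filter.Tendsto (fun N => qCC q x N j) Filter.atTop
      (nhds (q ^ (j * (j - 1) / 2) * x ^ j / qPochQ q j)) := by
    intro j
    have hR : Filter.Tendsto
        (fun N => ∏ i ∈ Finset.range j, ((1 : ℂ) - q ^ (N - j + i + 1))) Filter.atTop
        (nhds 1) := by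
      have h0 : Filter.Tendsto
          (fun N => ∏ i ∈ Finset.range j, ((1 : ℂ) - q ^ (N - j + i + 1))) Filter.atTop
          (nhds (∏ _i ∈ Finset.range j, (1 : ℂ))) := by
        refine tendsto_finset_prod _ fun i _ => ?_
        have h1 : Filter.Tendsto (fun N : ℕ => q ^ (N - j + i + 1)) Filter.atTop (nhds 0) := by
          refine (tendsto_pow_atTop_nhds_zero_of_norm_lt_one hq1).comp ?_
          exact Filter.tendsto_atTop_atTop.mpr fun b => ⟨b + j, fun N hN => by omega⟩
        simpa using (tendsto_const_nhds (x := (1 : ℂ))).sub h1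
      simpa using h0
    have h2 := ((hR.const_mul (q ^ (j * (j - 1) / 2))).mul_const (x ^ j)).div_const (qPochQ q j)
    rw [mul_one] at h2
    refine h2.congr' ?_
    filter_upwards [Filter.eventually_ge_atTop j] with N hN
    have h3 : ∏ k ∈ Finset.Ico (N - j) N, ((1 : ℂ) - q ^ (k + 1)) =
        ∏ i ∈ Finset.range j, ((1 : ℂ) - q ^ (N - j + i + 1)) := by
      rw [Finset.prod_Ico_eq_prod_range, show N - (N - j) = j from by omega]
    rw [qCC, if_pos hN, h3]
  -- Tannery
  have hTan : Filter.Tendsto (fun N => ∑' j : ℕ, qCC q x N j) Filter.atTop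
      (nhds (qExp_E q x)) := by
    rw [qExp_E]
    exact tendsto_tsum_of_dominated_convergence hbound_sum hlim
      (Filter.Eventually.of_forall fun N => hcc_bound N)
  have hTan' : Filter.Tendsto (fun N => ∏ k ∈ Finset.range N, (1 + x * q ^ k)) Filter.atTop
      (nhds (qExp_E q x)) := by
    refine hTan.congr fun N => ?_
    have h0 : ∑' j : ℕ, qCC q x N j = ∑ j ∈ Finset.range (N + 1), qCC q x N j :=
      tsum_eq_sum fun j hj => qCC_gt (by
        simp only [Finset.mem_range, not_lt] at hj; omega)
    rw [h0, ← qProd_eq_sum hden x N]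
  -- the product side
  have hProd : Filter.Tendsto (fun N => ∏ k ∈ Finset.range N, (1 + x * q ^ k)) Filter.atTop
      (nhds (∏' n : ℕ, (1 + x * q ^ n))) := by
    by_cases hz : ∀ n : ℕ, (1 : ℂ) + x * q ^ n ≠ 0
    · have hsum : Summable fun n : ℕ => Complex.log (1 + x * q ^ n) := by
        refine Summable.of_norm_bounded_eventually_nat (g := fun n => 3/2 * (‖x‖ * ‖q‖ ^ n))
          (((summable_geometric_of_lt_one (norm_nonneg q) hq1).mul_left ‖x‖).mul_left (3/2)) ?_
        have hsm : Filter.Tendsto (fun n : ℕ => ‖x * q ^ n‖) Filter.atTop (nhds 0) := by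
          have := (tendsto_pow_atTop_nhds_zero_of_norm_lt_one hq1).const_mul x
          simpa using this.norm
        filter_upwards [hsm.eventually_le_const (show (0:ℝ) < 1/2 by norm_num)] with n hn
        calc ‖Complex.log (1 + x * q ^ n)‖ ≤ 3/2 * ‖x * q ^ n‖ :=
              Complex.norm_log_one_add_half_le_self hn
          _ = 3/2 * (‖x‖ * ‖q‖ ^ n) := by rw [norm_mul, norm_pow]
      have hmult : Multipliable fun n : ℕ => (1 : ℂ) + x * q ^ n :=
        Complex.multipliable_of_summable_log hsum
      exact hmult.hasProd.tendsto_prod_nat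
    · push_neg at hz
      obtain ⟨n0, hn0⟩ := hz
      have hHP : HasProd (fun n : ℕ => (1 : ℂ) + x * q ^ n) 0 := by
        rw [HasProd]
        refine Filter.Tendsto.congr' ?_ (tendsto_const_nhds (x := (0 : ℂ)))
        filter_upwards [Filter.eventually_ge_atTop ({n0} : Finset ℕ)] with s hs
        exact (Finset.prod_eq_zero (hs (Finset.mem_singleton_self n0)) hn0).symm
      rw [hHP.tprod_eq]
      refine Filter.Tendsto.congr' ?_ (tendsto_const_nhds (x := (0 : ℂ)))
      filter_upwards [Filter.eventually_ge_atTop (n0 + 1)] with N hN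
      exact (Finset.prod_eq_zero (Finset.mem_range.mpr (by omega)) hn0).symm
  exact tendsto_nhds_unique hTan' hProd
end

section
/- For 0 < |q| < 1 and |x| < 1 with x ∉ q^ℤ (so that θ_q(−x) ≠ 0 makes sense and x avoids the zero spiral), the connection formula e_q(x) = ((q;q)_∞ / θ_q(−x)) · E_q(−q/x) holds, relating the two q-exponentials at x and q/x. -/
/-- The q-exponential `e_q(x)`. -/
noncomputable def qExp_e (q x : ℂ) : ℂ := ∑' n : ℕ, x ^ n / qPochQ q n

/-- Infinite q-Pochhammer symbol `(q;q)_∞`. -/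
noncomputable def qPochQInf (q : ℂ) : ℂ := ∏' n : ℕ, (1 - q ^ (n + 1))

open Finset Filter Topology

namespace QExpAux

variable {q x : ℂ}

lemma factor_ne (hq1 : ‖q‖ < 1) (k : ℕ) : (1 : ℂ) - q ^ (k + 1) ≠ 0 := by
  intro h
  have h1 : q ^ (k + 1) = 1 := by linear_combination -h
  have h2 : ‖q ^ (k + 1)‖ < 1 := by
    rw [norm_pow]
    exact pow_lt_one₀ (norm_nonneg q) hq1 k.succ_ne_zero
  rw [h1, norm_one] at h2
  exact lt_irrefl _ h2

lemma qPochQ_zero : qPochQ q 0 = 1 := Finset.prod_range_zero _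

lemma qPochQ_succ (n : ℕ) : qPochQ q (n + 1) = qPochQ q n * (1 - q ^ (n + 1)) :=
  Finset.prod_range_succ _ _

lemma qPochQ_ne_zero (hq1 : ‖q‖ < 1) (n : ℕ) : qPochQ q n ≠ 0 :=
  Finset.prod_ne_zero_iff.mpr fun k _ => factor_ne hq1 k

/-- Uniform positive lower bound constant for `‖qPochQ q n‖`. -/
noncomputable def Cq (q : ℂ) : ℝ := Real.exp (-(‖q‖ / ((1 - ‖q‖) * (1 - ‖q‖))))

lemma Cq_pos : 0 < Cq q := Real.exp_pos _

lemma one_sub_ge_exp {r t : ℝ} (hr : r < 1) (ht0 : 0 ≤ t) (htr : t ≤ r) :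
    Real.exp (-(t / (1 - r))) ≤ 1 - t := by
  have htl : t < 1 := lt_of_le_of_lt htr hr
  have h1t : 0 < 1 - t := by linarith
  have h1r : 0 < 1 - r := by linarith
  have key : 1 / (1 - t) ≤ Real.exp (t / (1 - r)) := by
    have h2 : t / (1 - t) + 1 ≤ Real.exp (t / (1 - t)) := Real.add_one_le_exp _
    have h3 : 1 / (1 - t) ≤ Real.exp (t / (1 - t)) := by
      have : t / (1 - t) + 1 = 1 / (1 - t) := by field_simp; ring
      linarith [this ▸ h2]
    refine h3.trans (Real.exp_le_exp.mpr ?_)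
    exact div_le_div_of_nonneg_left ht0 h1r (by linarith)
  rw [Real.exp_neg]
  rw [inv_le_comm₀ (Real.exp_pos _) h1t]
  calc (1 - t)⁻¹ = 1 / (1 - t) := (one_div _).symm
    _ ≤ Real.exp (t / (1 - r)) := key

lemma sum_geom_le (hq1 : ‖q‖ < 1) (n : ℕ) :
    ∑ k ∈ Finset.range n, ‖q‖ ^ (k + 1) ≤ ‖q‖ / (1 - ‖q‖) := by
  have hr0 : (0:ℝ) ≤ ‖q‖ := norm_nonneg q
  have hsum : Summable (fun k : ℕ => ‖q‖ ^ (k + 1)) := by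
    have := (summable_geometric_of_lt_one hr0 hq1)
    exact (summable_nat_add_iff 1).mpr this
  have h1 : ∑ k ∈ Finset.range n, ‖q‖ ^ (k + 1) ≤ ∑' k : ℕ, ‖q‖ ^ (k + 1) :=
    Summable.sum_le_tsum _ (fun k _ => pow_nonneg hr0 _) hsum
  have h2 : ∑' k : ℕ, ‖q‖ ^ (k + 1) = ‖q‖ / (1 - ‖q‖) := by
    have : ∀ k : ℕ, ‖q‖ ^ (k + 1) = ‖q‖ ^ k * ‖q‖ := fun k => by ring
    simp_rw [this]
    rw [tsum_mul_right, tsum_geometric_of_lt_one hr0 hq1]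
    rw [div_eq_mul_inv, mul_comm]
  linarith [h2 ▸ h1]

lemma qPochQ_norm_lower (hq1 : ‖q‖ < 1) (n : ℕ) : Cq q ≤ ‖qPochQ q n‖ := by
  have hr0 : (0:ℝ) ≤ ‖q‖ := norm_nonneg q
  have h1r : (0:ℝ) < 1 - ‖q‖ := by linarith
  calc Cq q = Real.exp (-((‖q‖ / (1 - ‖q‖)) / (1 - ‖q‖))) := by
        unfold Cq; rw [div_div]
    _ ≤ Real.exp (∑ k ∈ Finset.range n, -(‖q‖ ^ (k + 1) / (1 - ‖q‖))) := by
        apply Real.exp_le_exp.mpr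
        rw [Finset.sum_neg_distrib, ← Finset.sum_div]
        apply neg_le_neg
        gcongr
        · exact sum_geom_le hq1 n
    _ = ∏ k ∈ Finset.range n, Real.exp (-(‖q‖ ^ (k + 1) / (1 - ‖q‖))) :=
        (Real.exp_sum _ _)
    _ ≤ ∏ k ∈ Finset.range n, (1 - ‖q‖ ^ (k + 1)) := by
        apply Finset.prod_le_prod
        · intro k _; exact (Real.exp_pos _).le
        · intro k _
          exact one_sub_ge_exp hq1 (pow_nonneg hr0 _) (pow_le_of_le_one hr0 hq1.le k.succ_ne_zero)
    _ ≤ ∏ k ∈ Finset.range n, ‖1 - q ^ (k + 1)‖ := by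
        apply Finset.prod_le_prod
        · intro k _
          have : ‖q‖ ^ (k+1) < 1 := pow_lt_one₀ hr0 hq1 k.succ_ne_zero
          linarith
        · intro k _
          calc 1 - ‖q‖ ^ (k + 1) = ‖(1:ℂ)‖ - ‖q ^ (k+1)‖ := by rw [norm_one, norm_pow]
            _ ≤ ‖1 - q ^ (k + 1)‖ := norm_sub_norm_le _ _
    _ = ‖qPochQ q n‖ := by rw [qPochQ, norm_prod]

lemma T_succ (n : ℕ) : (n + 1) * ((n + 1) - 1) / 2 = n * (n - 1) / 2 + n := by
  rw [← Nat.choose_two_right, ← Nat.choose_two_right, Nat.choose_succ_succ,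
    Nat.choose_one_right, add_comm]

lemma two_dvd_T (n : ℕ) : 2 * (n * (n - 1) / 2) = n * (n - 1) := by
  apply Nat.mul_div_cancel'
  rcases n with _ | m
  · simp
  · simpa [Nat.succ_sub_one, mul_comm] using (Nat.even_mul_succ_self m).two_dvd

lemma int_half_eq {a b : ℤ} (h : a = 2 * b) : a / 2 = b := by
  subst h; exact Int.mul_ediv_cancel_left _ two_ne_zero

lemma castT' (k : ℕ) : ((k * (k - 1) / 2 : ℕ) : ℤ) * 2 = (k : ℤ) * ((k : ℤ) - 1) := by
  rcases k with _ | j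
  · simp
  · have h := two_dvd_T (j + 1)
    have h2 : (((j + 1) * ((j + 1) - 1) / 2 : ℕ) : ℤ) * 2 = (((j + 1) * ((j + 1) - 1) : ℕ) : ℤ) := by
      rw [mul_comm]; exact_mod_cast h
    rw [h2]
    push_cast [Nat.succ_sub_one]
    ring

lemma castT (n : ℕ) : ((n * (n - 1) / 2 : ℕ) : ℤ) = (n : ℤ) * ((n : ℤ) - 1) / 2 := by
  symm
  apply int_half_eq
  rw [← castT' n]
  ring

lemma castU (n : ℕ) : ((-(n:ℤ)) * (-(n:ℤ) - 1) / 2 : ℤ) = ((n * (n + 1) / 2 : ℕ) : ℤ) := by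
  apply int_half_eq
  have h : 2 * (n * (n + 1) / 2) = n * (n + 1) :=
    Nat.mul_div_cancel' (Nat.even_mul_succ_self n).two_dvd
  have h2 : ((n * (n + 1) : ℕ) : ℤ) = 2 * ((n * (n + 1) / 2 : ℕ) : ℤ) := by exact_mod_cast h.symm
  calc -(n:ℤ) * (-(n:ℤ) - 1) = ((n * (n + 1) : ℕ) : ℤ) := by push_cast; ring
    _ = 2 * ((n * (n + 1) / 2 : ℕ) : ℤ) := h2

lemma keyExp (m : ℤ) (k : ℕ) :
    (m - k) * ((m - k) - 1) / 2
      = m * (m - 1) / 2 + (((k * (k - 1) / 2 : ℕ) : ℤ) + (k : ℤ) * (1 - m)) := by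
  have hm : m * (m - 1) = 2 * (m * (m - 1) / 2) := by
    rcases Int.even_mul_succ_self (m - 1) with ⟨c, hc⟩
    rw [sub_add_cancel] at hc
    rw [mul_comm (m - 1) m] at hc
    rw [hc, int_half_eq (by linarith)]
    ring
  apply int_half_eq
  nlinarith [hm, castT' k]

lemma U_succ (n : ℕ) : (n + 1) * (n + 2) / 2 = n * (n + 1) / 2 + (n + 1) := by
  have h := T_succ (n + 1)
  simpa [Nat.succ_sub_one, mul_comm] using h

lemma summable_E_aux (hq1 : ‖q‖ < 1) {s : ℝ} (hs : 0 ≤ s) :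
    Summable (fun n : ℕ => ‖q‖ ^ (n * (n - 1) / 2) * s ^ n) := by
  have hr0 : (0:ℝ) ≤ ‖q‖ := norm_nonneg q
  apply summable_of_ratio_norm_eventually_le (r := 1/2) (by norm_num)
  have ht : Tendsto (fun n : ℕ => ‖q‖ ^ n * s) atTop (𝓝 0) := by
    simpa using (tendsto_pow_atTop_nhds_zero_of_lt_one hr0 hq1).mul_const s
  filter_upwards [ht.eventually (eventually_le_nhds (by norm_num : (0:ℝ) < 1/2))] with n hn
  have hfn : (0:ℝ) ≤ ‖q‖ ^ (n * (n - 1) / 2) * s ^ n := by positivity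
  have heq : ‖q‖ ^ ((n+1) * ((n+1) - 1) / 2) * s ^ (n+1)
      = (‖q‖ ^ n * s) * (‖q‖ ^ (n * (n - 1) / 2) * s ^ n) := by
    rw [T_succ, pow_add]
    ring
  rw [Real.norm_of_nonneg (by positivity), Real.norm_of_nonneg hfn, heq]
  exact mul_le_mul_of_nonneg_right hn hfn

lemma summable_E_norm (hq1 : ‖q‖ < 1) (x : ℂ) :
    Summable fun n : ℕ => ‖q ^ (n * (n - 1) / 2) * x ^ n / qPochQ q n‖ := by
  apply Summable.of_nonneg_of_le (fun n => norm_nonneg _) _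
    ((summable_E_aux hq1 (norm_nonneg x)).div_const (Cq q))
  intro n
  rw [norm_div, norm_mul, norm_pow, norm_pow]
  exact div_le_div_of_nonneg_left (by positivity) Cq_pos (qPochQ_norm_lower hq1 n)

lemma summable_E (hq1 : ‖q‖ < 1) (x : ℂ) :
    Summable fun n : ℕ => q ^ (n * (n - 1) / 2) * x ^ n / qPochQ q n :=
  (summable_E_norm hq1 x).of_norm

lemma summable_e_norm (hq1 : ‖q‖ < 1) (hx1 : ‖x‖ < 1) :
    Summable fun n : ℕ => ‖x ^ n / qPochQ q n‖ := by
  apply Summable.of_nonneg_of_le (fun n => norm_nonneg _) _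
    (((summable_geometric_of_lt_one (norm_nonneg x) hx1)).div_const (Cq q))
  intro n
  rw [norm_div, norm_pow]
  exact div_le_div_of_nonneg_left (by positivity) Cq_pos (qPochQ_norm_lower hq1 n)

lemma summable_theta_norm (hq1 : ‖q‖ < 1) (hx0 : x ≠ 0) (hx1 : ‖x‖ < 1) :
    Summable fun n : ℤ => ‖q ^ (n * (n - 1) / 2) * (-x) ^ n‖ := by
  have hr0 : (0:ℝ) ≤ ‖q‖ := norm_nonneg q
  have hs0 : (0:ℝ) < ‖x‖ := norm_pos_iff.mpr hx0
  apply Summable.of_nat_of_neg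
  · apply Summable.of_nonneg_of_le (fun n => norm_nonneg _) _
      (summable_geometric_of_lt_one (norm_nonneg x) hx1)
    intro n
    rw [norm_mul, norm_zpow, norm_zpow, norm_neg, ← castT, zpow_natCast, zpow_natCast]
    calc ‖q‖ ^ (n * (n - 1) / 2) * ‖x‖ ^ n ≤ 1 * ‖x‖ ^ n := by
          apply mul_le_mul_of_nonneg_right _ (by positivity)
          exact pow_le_one₀ hr0 hq1.le
      _ = ‖x‖ ^ n := one_mul _
  · have hval : ∀ n : ℕ, ‖q ^ ((-(n:ℤ)) * ((-(n:ℤ)) - 1) / 2) * (-x) ^ (-(n:ℤ))‖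
        = ‖q‖ ^ (n * (n + 1) / 2) * (‖x‖ ^ n)⁻¹ := by
      intro n
      rw [norm_mul, norm_zpow, norm_zpow, norm_neg, castU, zpow_natCast, zpow_neg, zpow_natCast]
    apply summable_of_ratio_norm_eventually_le (r := 1/2) (by norm_num)
    have ht : Tendsto (fun n : ℕ => ‖q‖ ^ (n + 1) / ‖x‖) atTop (𝓝 0) := by
      have := ((tendsto_pow_atTop_nhds_zero_of_lt_one hr0 hq1).comp
        (tendsto_add_atTop_nat 1)).div_const ‖x‖
      simpa [Function.comp] using this
    filter_upwards [ht.eventually (eventually_le_nhds (by norm_num : (0:ℝ) < 1/2))] with n hn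
    rw [norm_norm, norm_norm, hval, hval]
    have heq : ‖q‖ ^ ((n+1) * ((n+1) + 1) / 2) * (‖x‖ ^ (n+1))⁻¹
        = (‖q‖ ^ (n+1) / ‖x‖) * (‖q‖ ^ (n * (n + 1) / 2) * (‖x‖ ^ n)⁻¹) := by
      rw [U_succ, pow_add]
      field_simp
      ring
    rw [heq]
    exact mul_le_mul_of_nonneg_right hn (by positivity)

lemma funcEq (hq1 : ‖q‖ < 1) (x : ℂ) : qExp_E q x = (1 + x) * qExp_E q (q * x) := by
  have hFs := summable_E hq1 x
  have hGs := summable_E hq1 (q * x)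
  have key : ∀ n : ℕ,
      q ^ ((n+1) * ((n+1) - 1) / 2) * x ^ (n+1) / qPochQ q (n+1)
        - q ^ ((n+1) * ((n+1) - 1) / 2) * (q * x) ^ (n+1) / qPochQ q (n+1)
      = x * (q ^ (n * (n - 1) / 2) * (q * x) ^ n / qPochQ q n) := by
    intro n
    have hpn := qPochQ_ne_zero hq1 n
    have hfn1 := factor_ne hq1 n
    rw [T_succ, qPochQ_succ, pow_add]
    field_simp
    ring
  have h1 : qExp_E q x - qExp_E q (q * x) = x * qExp_E q (q * x) := by
    unfold qExp_E
    rw [← Summable.tsum_sub hFs hGs, Summable.tsum_eq_zero_add (hFs.sub hGs)]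
    have h0 : q ^ (0 * (0 - 1) / 2) * x ^ 0 / qPochQ q 0
        - q ^ (0 * (0 - 1) / 2) * (q * x) ^ 0 / qPochQ q 0 = 0 := by
      simp [qPochQ_zero]
    rw [h0, zero_add]
    calc ∑' n : ℕ, (q ^ ((n+1) * ((n+1) - 1) / 2) * x ^ (n+1) / qPochQ q (n+1)
          - q ^ ((n+1) * ((n+1) - 1) / 2) * (q * x) ^ (n+1) / qPochQ q (n+1))
        = ∑' n : ℕ, x * (q ^ (n * (n - 1) / 2) * (q * x) ^ n / qPochQ q n) := tsum_congr key
      _ = x * qExp_E q (q * x) := by rw [tsum_mul_left, qExp_E]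
  linear_combination h1

lemma funcEq_iter (hq1 : ‖q‖ < 1) (x : ℂ) (N : ℕ) :
    qExp_E q x = (∏ k ∈ Finset.range N, (1 + q ^ k * x)) * qExp_E q (q ^ N * x) := by
  induction N with
  | zero => simp
  | succ n ih =>
    have harg : q * (q ^ n * x) = q ^ (n + 1) * x := by rw [pow_succ]; ring
    rw [ih, funcEq hq1 (q ^ n * x), harg, Finset.prod_range_succ]
    ring

/-- bound constant -/
noncomputable def Kq (q : ℂ) : ℝ := (1 - ‖q‖)⁻¹ / Cq q

lemma Kq_nonneg (hq1 : ‖q‖ < 1) : 0 ≤ Kq q := by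
  have h1 : (0:ℝ) < 1 - ‖q‖ := by linarith
  have h2 : (0:ℝ) < Cq q := Cq_pos
  unfold Kq
  positivity

lemma E_sub_one_norm (hq1 : ‖q‖ < 1) {u : ℂ} (hu : ‖u‖ ≤ 1) :
    ‖qExp_E q u - 1‖ ≤ Kq q * ‖u‖ := by
  have hr0 : (0:ℝ) ≤ ‖q‖ := norm_nonneg q
  have hsum := summable_E hq1 u
  have hsum1 : Summable (fun n : ℕ => q ^ ((n+1) * ((n+1) - 1) / 2) * u ^ (n+1) / qPochQ q (n+1)) :=
    (hsum.comp_injective (add_left_injective 1)).congr (fun n => rfl)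
  have h0 : q ^ (0 * (0 - 1) / 2) * u ^ 0 / qPochQ q 0 = 1 := by simp [qPochQ_zero]
  have hE : qExp_E q u - 1
      = ∑' n : ℕ, q ^ ((n+1) * ((n+1) - 1) / 2) * u ^ (n+1) / qPochQ q (n+1) := by
    rw [qExp_E, Summable.tsum_eq_zero_add hsum, h0]
    ring
  rw [hE]
  have hnorm1 : Summable (fun n : ℕ => ‖q ^ ((n+1) * ((n+1) - 1) / 2) * u ^ (n+1) / qPochQ q (n+1)‖) :=
    (((summable_E_norm hq1 u)).comp_injective (add_left_injective 1)).congr (fun n => rfl)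
  refine (norm_tsum_le_tsum_norm hnorm1).trans ?_
  have hgeo : Summable (fun n : ℕ => ‖q‖ ^ n * (‖u‖ / Cq q)) :=
    (summable_geometric_of_lt_one hr0 hq1).mul_right _
  have hterm : ∀ n : ℕ, ‖q ^ ((n+1) * ((n+1) - 1) / 2) * u ^ (n+1) / qPochQ q (n+1)‖
      ≤ ‖q‖ ^ n * (‖u‖ / Cq q) := by
    intro n
    rw [norm_div, norm_mul, norm_pow, norm_pow]
    have h1 : ‖q‖ ^ ((n+1) * ((n+1) - 1) / 2) ≤ ‖q‖ ^ n := by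
      apply pow_le_pow_of_le_one hr0 hq1.le
      rw [T_succ]
      omega
    have h2 : ‖u‖ ^ (n+1) ≤ ‖u‖ := by
      simpa using pow_le_pow_of_le_one (norm_nonneg u) hu (by omega : 1 ≤ n + 1)
    have h3 : (Cq q) ≤ ‖qPochQ q (n+1)‖ := qPochQ_norm_lower hq1 (n+1)
    calc ‖q‖ ^ ((n+1) * ((n+1) - 1) / 2) * ‖u‖ ^ (n+1) / ‖qPochQ q (n+1)‖
        ≤ ‖q‖ ^ n * ‖u‖ / Cq q := by
          apply div_le_div₀ (by positivity) _ Cq_pos h3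
          exact mul_le_mul h1 h2 (by positivity) (by positivity)
      _ = ‖q‖ ^ n * (‖u‖ / Cq q) := by ring
  refine (Summable.tsum_le_tsum hterm hnorm1 hgeo).trans ?_
  rw [tsum_mul_right, tsum_geometric_of_lt_one hr0 hq1]
  rw [Kq]
  ring_nf
  exact le_refl _

lemma tendsto_E_one (hq1 : ‖q‖ < 1) (z : ℂ) :
    Tendsto (fun N : ℕ => qExp_E q (q ^ N * z)) atTop (𝓝 1) := by
  have hr0 : (0:ℝ) ≤ ‖q‖ := norm_nonneg q
  rw [tendsto_iff_norm_sub_tendsto_zero]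
  have htz : Tendsto (fun N : ℕ => Kq q * (‖q‖ ^ N * ‖z‖)) atTop (𝓝 0) := by
    have h := ((tendsto_pow_atTop_nhds_zero_of_lt_one hr0 hq1).mul_const ‖z‖).const_mul (Kq q)
    simpa using h
  have hev : ∀ᶠ N : ℕ in atTop, ‖qExp_E q (q ^ N * z) - 1‖ ≤ Kq q * (‖q‖ ^ N * ‖z‖) := by
    have ht2 : Tendsto (fun N : ℕ => ‖q‖ ^ N * ‖z‖) atTop (𝓝 0) := by
      simpa using (tendsto_pow_atTop_nhds_zero_of_lt_one hr0 hq1).mul_const ‖z‖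
    filter_upwards [ht2.eventually (eventually_le_nhds (by norm_num : (0:ℝ) < 1))] with N hN
    have : ‖q ^ N * z‖ ≤ 1 := by rwa [norm_mul, norm_pow]
    calc ‖qExp_E q (q ^ N * z) - 1‖ ≤ Kq q * ‖q ^ N * z‖ := E_sub_one_norm hq1 this
      _ = Kq q * (‖q‖ ^ N * ‖z‖) := by rw [norm_mul, norm_pow]
  exact squeeze_zero' (Eventually.of_forall fun N => norm_nonneg _) hev htz

lemma E_ne_zero (hq1 : ‖q‖ < 1) {z : ℂ} (hz : ∀ k : ℕ, 1 + q ^ k * z ≠ 0) :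
    qExp_E q z ≠ 0 := by
  have := (tendsto_E_one hq1 z).eventually
    (eventually_ne_nhds (by norm_num : (1:ℂ) ≠ 0))
  rcases this.exists with ⟨N, hN⟩
  rw [funcEq_iter hq1 z N]
  exact mul_ne_zero (Finset.prod_ne_zero_iff.mpr fun k _ => hz k) hN

lemma pochE (hq1 : ‖q‖ < 1) (n : ℕ) :
    qExp_E q (-q) = qPochQ q n * qExp_E q (-(q ^ (n + 1))) := by
  have h := funcEq_iter hq1 (-q) n
  rw [h]
  congr 1
  · rw [qPochQ]
    apply Finset.prod_congr rfl
    intro k _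
    rw [pow_succ']
    ring
  · congr 1
    rw [pow_succ]
    ring

lemma qPochQInf_eq (hq1 : ‖q‖ < 1) : qPochQInf q = qExp_E q (-q) := by
  have hr0 : (0:ℝ) ≤ ‖q‖ := norm_nonneg q
  have hpow : Tendsto (fun n : ℕ => ‖q‖ ^ (n+1)) atTop (𝓝 0) := by
    have := (tendsto_pow_atTop_nhds_zero_of_lt_one hr0 hq1).comp (tendsto_add_atTop_nat 1)
    exact this
  have hlog : Summable (fun n : ℕ => Complex.log (1 - q ^ (n + 1))) := by
    have hg : Summable (fun n : ℕ => 3/2 * ‖q‖ ^ (n+1)) := by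
      apply Summable.mul_left
      exact ((summable_geometric_of_lt_one hr0 hq1).comp_injective
        (add_left_injective 1)).congr (fun n => rfl)
    apply Summable.of_norm_bounded_eventually_nat hg
    filter_upwards [hpow.eventually (eventually_le_nhds (by norm_num : (0:ℝ) < 1/2))] with n hn
    have hz : ‖-q ^ (n+1)‖ ≤ 1/2 := by rwa [norm_neg, norm_pow]
    calc ‖Complex.log (1 - q ^ (n+1))‖ = ‖Complex.log (1 + -q ^ (n+1))‖ := by
          rw [sub_eq_add_neg]
      _ ≤ 3/2 * ‖-q ^ (n+1)‖ := Complex.norm_log_one_add_half_le_self hz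
      _ = 3/2 * ‖q‖ ^ (n+1) := by rw [norm_neg, norm_pow]
  have hM : Multipliable (fun n : ℕ => 1 - q ^ (n + 1)) :=
    Complex.multipliable_of_summable_log hlog
  have h1 : Tendsto (fun N : ℕ => qPochQ q N) atTop (𝓝 (qPochQInf q)) := by
    have := hM.hasProd.tendsto_prod_nat
    exact this
  have hEten : Tendsto (fun N : ℕ => qExp_E q (-(q ^ (N+1)))) atTop (𝓝 1) := by
    have h := tendsto_E_one hq1 (-q)
    have : (fun N : ℕ => qExp_E q (q ^ N * (-q))) = fun N : ℕ => qExp_E q (-(q ^ (N+1))) := by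
      funext N
      congr 1
      rw [pow_succ]
      ring
    rwa [this] at h
  have h2 : Tendsto (fun N : ℕ => qPochQ q N * qExp_E q (-(q ^ (N+1)))) atTop
      (𝓝 (qPochQInf q * 1)) := h1.mul hEten
  have h3 : (fun N : ℕ => qPochQ q N * qExp_E q (-(q ^ (N+1))))
      = fun _ : ℕ => qExp_E q (-q) := funext fun N => (pochE hq1 N).symm
  rw [h3] at h2
  have h4 := tendsto_nhds_unique h2 tendsto_const_nhds
  rw [mul_one] at h4
  exact h4

lemma term_eq (hq1 : ‖q‖ < 1) (hq0 : q ≠ 0) (hx0 : x ≠ 0) (m : ℤ) (k : ℕ) :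
    (x ^ k / qPochQ q k) * (q ^ ((m - k) * ((m - k) - 1) / 2) * (-x) ^ (m - k))
    = ((-1) ^ m * q ^ (m * (m - 1) / 2) * x ^ m)
      * (q ^ (k * (k - 1) / 2) * (-(q ^ ((1:ℤ) - m))) ^ k / qPochQ q k) := by
  have e1 : (-x) ^ (m - (k:ℤ)) = (-1) ^ m * (-1 : ℂ) ^ k * (x ^ m / x ^ k) := by
    have hneg : (-x) = (-1 : ℂ) * x := by ring
    have hinv : ((-1 : ℂ) ^ k)⁻¹ = (-1 : ℂ) ^ k := by
      rw [← inv_pow]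
      norm_num
    rw [hneg, mul_zpow, zpow_sub₀ (by norm_num : (-1:ℂ) ≠ 0), zpow_sub₀ hx0,
      zpow_natCast, zpow_natCast, div_eq_mul_inv ((-1:ℂ)^m), hinv, div_eq_mul_inv (x ^ m),
      ← div_eq_mul_inv (x ^ m)]
  have e2 : q ^ ((m - (k:ℤ)) * ((m - (k:ℤ)) - 1) / 2)
      = q ^ (m * (m - 1) / 2) * (q ^ (k * (k - 1) / 2) * (q ^ ((1:ℤ) - m)) ^ k) := by
    rw [keyExp m k, zpow_add₀ hq0, zpow_add₀ hq0, zpow_natCast, mul_comm ((k:ℤ)) (1 - m),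
      zpow_mul, zpow_natCast]
  have e3 : (-(q ^ ((1:ℤ) - m))) ^ k = (-1 : ℂ) ^ k * (q ^ ((1:ℤ) - m)) ^ k := by
    rw [neg_pow]
  rw [e2, e1, e3]
  have hpk := qPochQ_ne_zero hq1 k
  field_simp

lemma inner_sum (hq1 : ‖q‖ < 1) (hq0 : q ≠ 0) (hx0 : x ≠ 0) (m : ℤ) :
    ∑' k : ℕ, (x ^ k / qPochQ q k) * (q ^ ((m - k) * ((m - k) - 1) / 2) * (-x) ^ (m - k))
    = (-1) ^ m * q ^ (m * (m - 1) / 2) * x ^ m * qExp_E q (-(q ^ ((1:ℤ) - m))) := by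
  calc ∑' k : ℕ, (x ^ k / qPochQ q k) * (q ^ ((m - k) * ((m - k) - 1) / 2) * (-x) ^ (m - k))
      = ∑' k : ℕ, ((-1) ^ m * q ^ (m * (m - 1) / 2) * x ^ m)
        * (q ^ (k * (k - 1) / 2) * (-(q ^ ((1:ℤ) - m))) ^ k / qPochQ q k) :=
        tsum_congr (fun k => term_eq hq1 hq0 hx0 m k)
    _ = _ := by rw [tsum_mul_left, qExp_E]

lemma E_spiral_zero (hq1 : ‖q‖ < 1) (hq0 : q ≠ 0) {m : ℤ} (hm : 1 ≤ m) :
    qExp_E q (-(q ^ ((1:ℤ) - m))) = 0 := by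
  set n : ℕ := m.toNat with hn_def
  have hn : (n:ℤ) = m := Int.toNat_of_nonneg (by linarith)
  have hn1 : 1 ≤ n := by omega
  rw [funcEq_iter hq1 _ n]
  have hzero : 1 + q ^ (n - 1) * (-(q ^ ((1:ℤ) - m))) = 0 := by
    have hmul : (q:ℂ) ^ (n - 1) * q ^ ((1:ℤ) - m) = 1 := by
      rw [← zpow_natCast q (n - 1), ← zpow_add₀ hq0]
      have hexp : ((n - 1 : ℕ) : ℤ) + (1 - m) = 0 := by omega
      rw [hexp, zpow_zero]
    rw [mul_neg, hmul]
    ring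
  exact mul_eq_zero_of_left
    (Finset.prod_eq_zero (Finset.mem_range.mpr (by omega : n - 1 < n)) hzero) _

lemma nat_T_shift (n : ℕ) : n * (n + 1) / 2 = n * (n - 1) / 2 + n := by
  have h := T_succ n
  rwa [Nat.add_sub_cancel, mul_comm (n + 1) n] at h

lemma F_neg (hq1 : ‖q‖ < 1) (hq0 : q ≠ 0) (hx0 : x ≠ 0) (n : ℕ) :
    (-1) ^ (-(n:ℤ)) * q ^ ((-(n:ℤ)) * ((-(n:ℤ)) - 1) / 2) * x ^ (-(n:ℤ))
      * qExp_E q (-(q ^ ((1:ℤ) - (-(n:ℤ)))))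
    = qExp_E q (-q) * (q ^ (n * (n - 1) / 2) * (-(q / x)) ^ n / qPochQ q n) := by
  have hpn := qPochQ_ne_zero hq1 n
  have hE : qExp_E q (-(q ^ ((1:ℤ) - (-(n:ℤ))))) = qExp_E q (-q) / qPochQ q n := by
    have harg : (q : ℂ) ^ ((1:ℤ) - (-(n:ℤ))) = q ^ (n + 1) := by
      rw [show (1:ℤ) - (-(n:ℤ)) = ((n + 1 : ℕ) : ℤ) by push_cast; ring, zpow_natCast]
    rw [harg, pochE hq1 n, mul_comm, mul_div_assoc, div_self hpn, mul_one]
  have h1 : ((-1:ℂ)) ^ (-(n:ℤ)) = (-1:ℂ) ^ n := by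
    rw [zpow_neg, zpow_natCast, ← inv_pow]
    norm_num
  have h2 : q ^ ((-(n:ℤ)) * ((-(n:ℤ)) - 1) / 2) = q ^ (n * (n + 1) / 2 : ℕ) := by
    rw [castU, zpow_natCast]
  have h3 : x ^ (-(n:ℤ)) = (x ^ n)⁻¹ := by rw [zpow_neg, zpow_natCast]
  have h4 : (-(q / x)) ^ n = (-1:ℂ) ^ n * (q ^ n / x ^ n) := by rw [neg_pow, div_pow]
  have h5 : (q:ℂ) ^ (n * (n + 1) / 2 : ℕ) = q ^ (n * (n - 1) / 2 : ℕ) * q ^ n := by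
    rw [← pow_add, nat_T_shift]
  rw [hE, h1, h2, h3, h4, h5]
  field_simp

end QExpAux

set_option maxHeartbeats 2000000 in
open QExpAux Filter Topology in
/-- Connection formula between the two q-exponential functions. -/
theorem qExp_connection (q x : ℂ) (hq0 : 0 < ‖q‖) (hq1 : ‖q‖ < 1)
    (hx0 : x ≠ 0) (hx1 : ‖x‖ < 1) (hspiral : ∀ k : ℤ, x ≠ q ^ k) :
    qExp_e q x = qPochQInf q / jTheta q (-x) * qExp_E q (-(q / x)) := by
  have hq0' : q ≠ 0 := by
    intro h
    rw [h, norm_zero] at hq0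
    exact lt_irrefl _ hq0
  have hA : Summable fun k : ℕ => ‖x ^ k / qPochQ q k‖ := summable_e_norm hq1 hx1
  have hB : Summable fun n : ℤ => ‖q ^ (n * (n - 1) / 2) * (-x) ^ n‖ :=
    summable_theta_norm hq1 hx0 hx1
  have hprod : qExp_e q x * jTheta q (-x)
      = ∑' p : ℕ × ℤ, (x ^ p.1 / qPochQ q p.1) * (q ^ (p.2 * (p.2 - 1) / 2) * (-x) ^ p.2) := by
    rw [qExp_e, jTheta]
    exact tsum_mul_tsum_of_summable_norm hA hB
  have hSum0 : Summable (fun p : ℕ × ℤ =>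
      (x ^ p.1 / qPochQ q p.1) * (q ^ (p.2 * (p.2 - 1) / 2) * (-x) ^ p.2)) := by
    have h := (hA.mul_of_nonneg hB (fun k => norm_nonneg _) (fun n => norm_nonneg _) :
      Summable fun p : ℕ × ℤ => ‖x ^ p.1 / qPochQ q p.1‖ * ‖q ^ (p.2 * (p.2 - 1) / 2) * (-x) ^ p.2‖)
    apply Summable.of_norm_bounded h
    intro p
    rw [norm_mul]
  let e1 : ℕ × ℤ ≃ ℕ × ℤ :=
    ⟨fun p => (p.1, p.2 - p.1), fun p => (p.1, p.2 + p.1),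
      fun p => by simp, fun p => by simp⟩
  have hshear : ∑' p : ℕ × ℤ, (x ^ p.1 / qPochQ q p.1)
        * (q ^ ((p.2 - p.1) * ((p.2 - p.1) - 1) / 2) * (-x) ^ (p.2 - p.1))
      = ∑' p : ℕ × ℤ, (x ^ p.1 / qPochQ q p.1) * (q ^ (p.2 * (p.2 - 1) / 2) * (-x) ^ p.2) := by
    exact e1.tsum_eq (fun p : ℕ × ℤ =>
      (x ^ p.1 / qPochQ q p.1) * (q ^ (p.2 * (p.2 - 1) / 2) * (-x) ^ p.2))
  have hSum1 : Summable (fun p : ℕ × ℤ => (x ^ p.1 / qPochQ q p.1)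
      * (q ^ ((p.2 - p.1) * ((p.2 - p.1) - 1) / 2) * (-x) ^ (p.2 - p.1))) :=
    ((e1.summable_iff (f := fun p : ℕ × ℤ =>
      (x ^ p.1 / qPochQ q p.1) * (q ^ (p.2 * (p.2 - 1) / 2) * (-x) ^ p.2))).mpr hSum0).congr
      (fun p => rfl)
  have hSum2 : Summable (fun p : ℤ × ℕ => (x ^ p.2 / qPochQ q p.2)
      * (q ^ ((p.1 - p.2) * ((p.1 - p.2) - 1) / 2) * (-x) ^ (p.1 - p.2))) :=
    (((Equiv.prodComm ℤ ℕ).summable_iff (f := fun p : ℕ × ℤ => (x ^ p.1 / qPochQ q p.1)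
      * (q ^ ((p.2 - p.1) * ((p.2 - p.1) - 1) / 2) * (-x) ^ (p.2 - p.1)))).mpr hSum1).congr
      (fun p => rfl)
  have hswap : ∑' p : ℤ × ℕ, (x ^ p.2 / qPochQ q p.2)
        * (q ^ ((p.1 - p.2) * ((p.1 - p.2) - 1) / 2) * (-x) ^ (p.1 - p.2))
      = ∑' p : ℕ × ℤ, (x ^ p.1 / qPochQ q p.1)
        * (q ^ ((p.2 - p.1) * ((p.2 - p.1) - 1) / 2) * (-x) ^ (p.2 - p.1)) :=
    (Equiv.prodComm ℤ ℕ).tsum_eq (fun p : ℕ × ℤ => (x ^ p.1 / qPochQ q p.1)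
      * (q ^ ((p.2 - p.1) * ((p.2 - p.1) - 1) / 2) * (-x) ^ (p.2 - p.1)))
  have hiter : ∑' p : ℤ × ℕ, (x ^ p.2 / qPochQ q p.2)
        * (q ^ ((p.1 - p.2) * ((p.1 - p.2) - 1) / 2) * (-x) ^ (p.1 - p.2))
      = ∑' m : ℤ, ∑' k : ℕ, (x ^ k / qPochQ q k)
        * (q ^ ((m - k) * ((m - k) - 1) / 2) * (-x) ^ (m - k)) :=
    Summable.tsum_prod hSum2
  have hmain : qExp_e q x * jTheta q (-x)
      = ∑' m : ℤ, (-1) ^ m * q ^ (m * (m - 1) / 2) * x ^ m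
        * qExp_E q (-(q ^ ((1:ℤ) - m))) := by
    rw [hprod, ← hshear, ← hswap, hiter]
    exact tsum_congr (fun m => inner_sum hq1 hq0' hx0 m)
  set F : ℤ → ℂ := fun m => (-1) ^ m * q ^ (m * (m - 1) / 2) * x ^ m
    * qExp_E q (-(q ^ ((1:ℤ) - m))) with hF
  have hvanish : ∀ m : ℤ, 1 ≤ m → F m = 0 := by
    intro m hm
    rw [hF]
    simp only []
    rw [E_spiral_zero hq1 hq0' hm, mul_zero]
  have hreindex : ∑' n : ℕ, F (-(n:ℤ)) = ∑' m : ℤ, F m := by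
    apply Function.Injective.tsum_eq
    · intro a b hab
      simpa using hab
    · intro m hm
      rcases le_or_gt m 0 with h | h
      · refine ⟨(-m).toNat, ?_⟩
        simp only []
        omega
      · exact absurd (hvanish m (by omega)) hm
  have hnat : ∑' n : ℕ, F (-(n:ℤ)) = qExp_E q (-q) * qExp_E q (-(q / x)) := by
    calc ∑' n : ℕ, F (-(n:ℤ))
        = ∑' n : ℕ, qExp_E q (-q)
          * (q ^ (n * (n - 1) / 2) * (-(q / x)) ^ n / qPochQ q n) :=
          tsum_congr (fun n => F_neg hq1 hq0' hx0 n)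
      _ = qExp_E q (-q) * qExp_E q (-(q / x)) := by rw [tsum_mul_left, ← qExp_E]
  have hmain2 : qExp_e q x * jTheta q (-x) = qExp_E q (-q) * qExp_E q (-(q / x)) := by
    rw [hmain, ← hreindex, hnat]
  have hPne : qExp_E q (-q) ≠ 0 := by
    apply E_ne_zero hq1
    intro k
    have h := factor_ne hq1 k
    intro hcon
    apply h
    rw [← hcon, pow_succ]
    ring
  have hDne : qExp_E q (-(q / x)) ≠ 0 := by
    apply E_ne_zero hq1
    intro k hcon
    apply hspiral ((k : ℤ) + 1)
    rw [show ((k:ℤ) + 1) = ((k + 1 : ℕ) : ℤ) by push_cast; ring, zpow_natCast]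
    have hxk : x ≠ 0 := hx0
    field_simp at hcon
    rw [pow_succ]
    linear_combination hcon
  have hθ : jTheta q (-x) ≠ 0 := by
    intro h
    rw [h, mul_zero] at hmain2
    exact (mul_ne_zero hPne hDne) hmain2.symm
  rw [qPochQInf_eq hq1, div_mul_eq_mul_div, eq_div_iff hθ]
  exact hmain2
end
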